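/- Let X₁, X₂ : ℝ³ → ℝ³ be smooth vector fields and let Ω be a bounded open subset of ℝ³ such that X₁, X₂, and [X₁,X₂] are linearly independent at every point of the closure of Ω. Then there exists T > 0 such that the following holds: if q : [0,T'] → ℝ³ is a time-optimal trajectory of the control system contained in Ω with T' ≤ T, admitting an extremal lift λ with φ₁₂(t) ≠ 0 for all t ∈ [0,T'], then q is bang-bang, i.e. [0,T'] is the union of the closures of finitely many bang arcs. -/

import Mathlib

open MeasureTheory Set
open scoped RealInnerProductSpace

noncomputable section

/-- The state space `ℝ³`, with its Euclidean inner product. -/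
abbrev E3 : Type := EuclideanSpace ℝ (Fin 3)

/-- Lie bracket of vector fields: `[X,Y] = DY·X − DX·Y`. -/
def lieBracketVF {E : Type*} [NormedAddCommGroup E] [NormedSpace ℝ E]
    (X Y : E → E) : E → E :=
  fun x => fderiv ℝ Y x (X x) - fderiv ℝ X x (Y x)

/-- `X₁₂ = [X₁, X₂]`. -/
def X12 (X₁ X₂ : E3 → E3) : E3 → E3 := lieBracketVF X₁ X₂

/-- `X₊₁₂ = [X₁ + X₂, X₁₂]`. -/
def Xp12 (X₁ X₂ : E3 → E3) : E3 → E3 :=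
  lieBracketVF (fun x => X₁ x + X₂ x) (X12 X₁ X₂)

/-- `X₋₁₂ = [X₁ − X₂, X₁₂]`. -/
def Xm12 (X₁ X₂ : E3 → E3) : E3 → E3 :=
  lieBracketVF (fun x => X₁ x - X₂ x) (X12 X₁ X₂)

/-- An admissible pair on `[0,T]`: a measurable control `u = (u₁,u₂)` with values in
`[−1,1]²` together with an absolutely continuous trajectory `q` (encoded by the
integral representation) satisfying `q' = u₁X₁(q) + u₂X₂(q)` a.e. on `[0,T]`. -/
def IsAdmissiblePair (X₁ X₂ : E3 → E3) (T : ℝ) (q : ℝ → E3) (u : ℝ → ℝ × ℝ) : Prop :=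
  0 ≤ T ∧ Measurable u ∧ (∀ t ∈ Icc (0:ℝ) T, |(u t).1| ≤ 1 ∧ |(u t).2| ≤ 1) ∧
    IntegrableOn (fun s => (u s).1 • X₁ (q s) + (u s).2 • X₂ (q s)) (Icc 0 T) ∧
    ∀ t ∈ Icc (0:ℝ) T,
      q t = q 0 + ∫ s in Icc (0:ℝ) t, ((u s).1 • X₁ (q s) + (u s).2 • X₂ (q s))

/-- A trajectory `q` on `[0,T]` is time-optimal if no admissible pair on a
shorter interval `[0,T'']` joins `q 0` to `q T`. -/
def IsTimeOptimal (X₁ X₂ : E3 → E3) (T : ℝ) (q : ℝ → E3) : Prop :=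
  ¬ ∃ (T'' : ℝ) (q' : ℝ → E3) (u' : ℝ → ℝ × ℝ),
      T'' < T ∧ IsAdmissiblePair X₁ X₂ T'' q' u' ∧ q' 0 = q 0 ∧ q' T'' = q T

/-- Right-hand side of the adjoint equation: `−(Dₓ(u₁X₁ + u₂X₂)(q t))ᵀ λ(t)`. -/
def adjVec (X₁ X₂ : E3 → E3) (u : ℝ → ℝ × ℝ) (q lam : ℝ → E3) (t : ℝ) : E3 :=
  -(ContinuousLinearMap.adjoint
      ((u t).1 • fderiv ℝ X₁ (q t) + (u t).2 • fderiv ℝ X₂ (q t)) (lam t))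

/-- An extremal lift of an admissible pair `(q,u)` on `[0,T]`: a nonvanishing
absolutely continuous solution of the adjoint equation satisfying the
maximality condition of the PMP a.e. -/
def IsExtremalLift (X₁ X₂ : E3 → E3) (T : ℝ) (q : ℝ → E3) (u : ℝ → ℝ × ℝ)
    (lam : ℝ → E3) : Prop :=
  (∀ t ∈ Icc (0:ℝ) T, lam t ≠ 0) ∧
    IntegrableOn (adjVec X₁ X₂ u q lam) (Icc 0 T) ∧
    (∀ t ∈ Icc (0:ℝ) T, lam t = lam 0 + ∫ s in Icc (0:ℝ) t, adjVec X₁ X₂ u q lam s) ∧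
    ∀ᵐ t ∂volume, t ∈ Icc (0:ℝ) T →
      (u t).1 * ⟪lam t, X₁ (q t)⟫ + (u t).2 * ⟪lam t, X₂ (q t)⟫ =
        |⟪lam t, X₁ (q t)⟫| + |⟪lam t, X₂ (q t)⟫|

/-- The switching function `t ↦ ⟨λ(t), X(q(t))⟩` associated with a vector field `X`. -/
def phiF (X : E3 → E3) (q lam : ℝ → E3) (t : ℝ) : ℝ := ⟪lam t, X (q t)⟫

/-- `(a,b)` is a bang arc: a maximal open subinterval of `[0,T]` on which both
`φ₁` and `φ₂` are nonvanishing. -/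
def IsBangArc (T : ℝ) (φ₁ φ₂ : ℝ → ℝ) (a b : ℝ) : Prop :=
  0 ≤ a ∧ a < b ∧ b ≤ T ∧ (∀ t ∈ Ioo a b, φ₁ t ≠ 0 ∧ φ₂ t ≠ 0) ∧
    ∀ a' b', 0 ≤ a' → a' ≤ a → b ≤ b' → b' ≤ T →
      (∀ t ∈ Ioo a' b', φ₁ t ≠ 0 ∧ φ₂ t ≠ 0) → a' = a ∧ b' = b

/-- `(a,b)` is a `u₁`-singular arc: a maximal open subinterval of `[0,T]` on which
`φ₁` vanishes identically and `φ₂` is nonvanishing. -/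
def IsU1SingularArc (T : ℝ) (φ₁ φ₂ : ℝ → ℝ) (a b : ℝ) : Prop :=
  0 ≤ a ∧ a < b ∧ b ≤ T ∧ (∀ t ∈ Ioo a b, φ₁ t = 0 ∧ φ₂ t ≠ 0) ∧
    ∀ a' b', 0 ≤ a' → a' ≤ a → b ≤ b' → b' ≤ T →
      (∀ t ∈ Ioo a' b', φ₁ t = 0 ∧ φ₂ t ≠ 0) → a' = a ∧ b' = b

/-- `(a,b)` is a `u₂`-singular arc. -/
def IsU2SingularArc (T : ℝ) (φ₁ φ₂ : ℝ → ℝ) (a b : ℝ) : Prop :=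
  0 ≤ a ∧ a < b ∧ b ≤ T ∧ (∀ t ∈ Ioo a b, φ₂ t = 0 ∧ φ₁ t ≠ 0) ∧
    ∀ a' b', 0 ≤ a' → a' ≤ a → b ≤ b' → b' ≤ T →
      (∀ t ∈ Ioo a' b', φ₂ t = 0 ∧ φ₁ t ≠ 0) → a' = a ∧ b' = b

/-- A singular arc is a `u₁`- or `u₂`-singular arc. -/
def IsSingularArc (T : ℝ) (φ₁ φ₂ : ℝ → ℝ) (a b : ℝ) : Prop :=
  IsU1SingularArc T φ₁ φ₂ a b ∨ IsU2SingularArc T φ₁ φ₂ a b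

/-- A switching time: a point of `(0,T)` separating two bang arcs. -/
def IsSwitchingTime (T : ℝ) (φ₁ φ₂ : ℝ → ℝ) (τ : ℝ) : Prop :=
  ∃ a b, IsBangArc T φ₁ φ₂ a τ ∧ IsBangArc T φ₁ φ₂ τ b

/-- The scalar control `ui` switches at the switching time `τ`: it is a.e. equal to
a constant of modulus 1 on a left neighborhood of `τ` and to the opposite constant
on a right neighborhood of `τ`. -/
def SwitchesAt (T : ℝ) (φ₁ φ₂ : ℝ → ℝ) (ui : ℝ → ℝ) (τ : ℝ) : Prop :=
  IsSwitchingTime T φ₁ φ₂ τ ∧ ∃ c : ℝ, |c| = 1 ∧ ∃ ε > 0,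
    (∀ᵐ t ∂volume, t ∈ Ioo (τ - ε) τ → ui t = c) ∧
    (∀ᵐ t ∂volume, t ∈ Ioo τ (τ + ε) → ui t = -c)

/-- The trajectory is bang-bang: `[0,T]` is the union of the closures of finitely
many bang arcs. -/
def IsBangBang (T : ℝ) (φ₁ φ₂ : ℝ → ℝ) : Prop :=
  ∃ (n : ℕ) (a b : Fin n → ℝ), (∀ i, IsBangArc T φ₁ φ₂ (a i) (b i)) ∧
    Icc (0:ℝ) T = ⋃ i, Icc (a i) (b i)


section Helpers
open Filter Topology


/-- If a continuous monotone function has a.e. derivative `c ≥ 0` on `(x,y)`,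
then `c * (y - x) ≤ g y - g x`. -/
lemma mono_ftc {g : ℝ → ℝ} (hg : Continuous g) (hmono : Monotone g) {x y c : ℝ}
    (hxy : x ≤ y) (hc : 0 ≤ c)
    (hd : ∀ᵐ t ∂volume, t ∈ Set.Ioo x y → HasDerivAt g c t) :
    c * (y - x) ≤ g y - g x := by
  rcases eq_or_lt_of_le hxy with rfl | hlt
  · simp
  set δ : ℕ → ℝ := fun n => 1 / (n + 1) with hδ
  have hδpos : ∀ n, 0 < δ n := fun n => by positivity
  set D : ℕ → ℝ → ℝ := fun n t => (g (t + δ n) - g t) * (n + 1) with hD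
  have hDnn : ∀ n t, 0 ≤ D n t := by
    intro n t
    have : g t ≤ g (t + δ n) := hmono (by linarith [hδpos n])
    have : 0 ≤ g (t + δ n) - g t := by linarith
    positivity
  have hDcont : ∀ n, Continuous (D n) := by
    intro n
    exact ((hg.comp (continuous_id.add continuous_const)).sub hg).mul continuous_const
  -- pointwise convergence at points where HasDerivAt g c holds
  have htend : ∀ t, HasDerivAt g c t → Tendsto (fun n => D n t) atTop (𝓝 c) := by
    intro t ht
    have hslope := hasDerivAt_iff_tendsto_slope.1 ht
    have hseq : Tendsto (fun n : ℕ => t + δ n) atTop (𝓝[≠] t) := by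
      refine tendsto_nhdsWithin_of_tendsto_nhds_of_eventually_within _ ?_ ?_
      · have : Tendsto δ atTop (𝓝 0) := tendsto_one_div_add_atTop_nhds_zero_nat
        simpa using (tendsto_const_nhds.add this)
      · exact Eventually.of_forall fun n => by
          simp only [mem_compl_iff, mem_singleton_iff]
          nlinarith [hδpos n]
    have := hslope.comp hseq
    refine this.congr fun n => ?_
    have hne : t + δ n - t ≠ 0 := by nlinarith [hδpos n]
    simp only [Function.comp, slope_def_field, div_eq_iff, hD]
    have hδn : δ n * ((n:ℝ) + 1) = 1 := by simp only [hδ]; field_simp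
    field_simp [hδ]
    linear_combination (-(g (t + δ n) - g t)) * hδn
  -- Fatou
  have hmeasD : ∀ n, Measurable fun t => ENNReal.ofReal (D n t) :=
    fun n => (hDcont n).measurable.ennreal_ofReal
  have fatou := MeasureTheory.lintegral_liminf_le (μ := volume.restrict (Ioc x y)) (u := atTop) hmeasD
  have hliminf_eq : (∫⁻ t in Ioc x y, liminf (fun n => ENNReal.ofReal (D n t)) atTop)
      = ∫⁻ t in Ioc x y, ENNReal.ofReal c := by
    refine lintegral_congr_ae ?_
    have h1 : ∀ᵐ t ∂volume.restrict (Ioc x y), t ∈ Set.Ioo x y → HasDerivAt g c t :=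
      ae_restrict_of_ae hd
    have h2 : ∀ᵐ t ∂volume.restrict (Ioc x y), t ∈ Set.Ioo x y := by
      have : ∀ᵐ t ∂volume.restrict (Ioc x y), t ∈ Ioc x y := ae_restrict_mem measurableSet_Ioc
      have hy : ∀ᵐ t ∂volume.restrict (Ioc x y), t ≠ y := by
        refine ae_restrict_of_ae ?_
        simpa using (measure_eq_zero_iff_ae_notMem (μ := volume)).1 (Real.volume_singleton (a := y))
      filter_upwards [this, hy] with t ht hne
      exact ⟨ht.1, lt_of_le_of_ne ht.2 hne⟩
    filter_upwards [h1, h2] with t h1 h2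
    exact ((ENNReal.continuous_ofReal.tendsto _).comp (htend t (h1 h2))).liminf_eq
  rw [hliminf_eq] at fatou
  have hLHS : (∫⁻ t in Ioc x y, ENNReal.ofReal c) = ENNReal.ofReal (c * (y - x)) := by
    rw [setLIntegral_const, Real.volume_Ioc, ← ENNReal.ofReal_mul hc]
  -- bound each integral
  have hbound : ∀ n, (∫⁻ t in Ioc x y, ENNReal.ofReal (D n t))
      ≤ ENNReal.ofReal (g (y + δ n) - g x) := by
    intro n
    have hint : IntegrableOn (D n) (Ioc x y) volume := (hDcont n).integrableOn_Ioc
    rw [← MeasureTheory.ofReal_integral_eq_lintegral_ofReal hint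
        (Eventually.of_forall fun t => hDnn n t)]
    refine ENNReal.ofReal_le_ofReal ?_
    have hIoc : ∫ t in Ioc x y, D n t = ∫ t in x..y, D n t := by
      rw [intervalIntegral.integral_of_le hxy]
    have hii : ∀ a b : ℝ, IntervalIntegrable g volume a b := fun a b => hg.intervalIntegrable a b
    have split : ∫ t in x..y, D n t
        = ((∫ t in y..(y + δ n), g t) - ∫ t in x..(x + δ n), g t) * (n + 1) := by
      rw [intervalIntegral.integral_mul_const]
      congr 1
      have : ∫ t in x..y, (g (t + δ n) - g t) =
          (∫ t in x..y, g (t + δ n)) - ∫ t in x..y, g t := by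
        apply intervalIntegral.integral_sub
        · exact ((hg.comp (continuous_id.add continuous_const))).intervalIntegrable x y
        · exact hii x y
      rw [this, intervalIntegral.integral_comp_add_right]
      have e1 : (∫ t in (x + δ n)..(y + δ n), g t)
          = (∫ t in (x + δ n)..y, g t) + ∫ t in y..(y + δ n), g t :=
        (intervalIntegral.integral_add_adjacent_intervals (hii _ _) (hii _ _)).symm
      have e2 : (∫ t in x..y, g t)
          = (∫ t in x..(x + δ n), g t) + ∫ t in (x + δ n)..y, g t :=
        (intervalIntegral.integral_add_adjacent_intervals (hii _ _) (hii _ _)).symm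
      rw [e1, e2]; ring
    have b1 : (∫ t in y..(y + δ n), g t) ≤ g (y + δ n) * δ n := by
      have : (∫ t in y..(y + δ n), g t) ≤ ∫ t in y..(y + δ n), g (y + δ n) := by
        apply intervalIntegral.integral_mono_on (by linarith [hδpos n]) (hii _ _)
          (intervalIntegrable_const)
        intro t ht
        exact hmono ht.2
      simpa [intervalIntegral.integral_const, smul_eq_mul, mul_comm] using this
    have b2 : g x * δ n ≤ ∫ t in x..(x + δ n), g t := by
      have : (∫ t in x..(x + δ n), g x) ≤ ∫ t in x..(x + δ n), g t := by
        apply intervalIntegral.integral_mono_on (by linarith [hδpos n])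
          (intervalIntegrable_const) (hii _ _)
        intro t ht
        exact hmono ht.1
      simpa [intervalIntegral.integral_const, smul_eq_mul, mul_comm] using this
    have hδn : δ n * (n+1 : ℝ) = 1 := by
      simp only [hδ]; field_simp
    calc ∫ t in Ioc x y, D n t
        = ((∫ t in y..(y + δ n), g t) - ∫ t in x..(x + δ n), g t) * (n + 1) := by
          rw [hIoc, split]
      _ ≤ (g (y + δ n) * δ n - g x * δ n) * (n + 1) := by
          have hn1 : (0:ℝ) ≤ (n:ℝ) + 1 := by positivity
          apply mul_le_mul_of_nonneg_right _ hn1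
          linarith
      _ = g (y + δ n) - g x := by
          have : (g (y + δ n) - g x) * (δ n * (n+1)) = g (y + δ n) - g x := by
            rw [hδn, mul_one]
          calc (g (y + δ n) * δ n - g x * δ n) * (n + 1)
              = (g (y + δ n) - g x) * (δ n * (n+1)) := by ring
            _ = g (y + δ n) - g x := this
  -- pass to the limit on the RHS
  have hRHS : liminf (fun n => ∫⁻ t in Ioc x y, ENNReal.ofReal (D n t)) atTop
      ≤ ENNReal.ofReal (g y - g x) := by
    have htendg : Tendsto (fun n => ENNReal.ofReal (g (y + δ n) - g x)) atTop
        (𝓝 (ENNReal.ofReal (g y - g x))) := by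
      apply (ENNReal.continuous_ofReal.tendsto _).comp
      have : Tendsto (fun n => y + δ n) atTop (𝓝 y) := by
        have : Tendsto δ atTop (𝓝 0) := tendsto_one_div_add_atTop_nhds_zero_nat
        simpa using (tendsto_const_nhds.add this)
      exact ((hg.tendsto y).comp this).sub tendsto_const_nhds
    calc liminf (fun n => ∫⁻ t in Ioc x y, ENNReal.ofReal (D n t)) atTop
        ≤ liminf (fun n => ENNReal.ofReal (g (y + δ n) - g x)) atTop :=
          liminf_le_liminf (Eventually.of_forall hbound)
      _ = ENNReal.ofReal (g y - g x) := htendg.liminf_eq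
  have final : ENNReal.ofReal (c * (y - x)) ≤ ENNReal.ofReal (g y - g x) := by
    rw [← hLHS]; exact le_trans fatou hRHS
  have h1 : 0 ≤ g y - g x := by linarith [hmono hxy]
  exact (ENNReal.ofReal_le_ofReal_iff h1).1 final




/-- A real Lipschitz function with a.e. vanishing derivative on `(a,b)` takes equal
values at `a` and `b`. -/
lemma const_of_lipschitz_ae_deriv_zero {f : ℝ → ℝ} {K : NNReal} (hf : LipschitzWith K f)
    {a b : ℝ} (hab : a ≤ b)
    (hd : ∀ᵐ t ∂volume, t ∈ Set.Ioo a b → HasDerivAt f 0 t) : f b = f a := by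
  have key : ∀ (h : ℝ → ℝ), LipschitzWith K h →
      (∀ᵐ t ∂volume, t ∈ Set.Ioo a b → HasDerivAt h 0 t) → 0 ≤ h b - h a := by
    intro h hh hhd
    set g : ℝ → ℝ := fun t => (K : ℝ) * t + h t with hg
    have hgmono : Monotone g := by
      intro s t hst
      have hdist := hh.dist_le_mul s t
      rw [Real.dist_eq, Real.dist_eq] at hdist
      have h1 : h s - h t ≤ (K:ℝ) * |s - t| := le_trans (le_abs_self _) hdist
      have h2 : |s - t| = t - s := by rw [abs_sub_comm]; exact abs_of_nonneg (by linarith)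
      simp only [hg]
      rw [h2] at h1
      nlinarith
    have hgcont : Continuous g := (continuous_const.mul continuous_id).add hh.continuous
    have hgd : ∀ᵐ t ∂volume, t ∈ Set.Ioo a b → HasDerivAt g (K : ℝ) t := by
      filter_upwards [hhd] with t ht hmem
      exact (((hasDerivAt_id t).const_mul (K:ℝ)).add (ht hmem)).congr_deriv (by simp)
    have hK : (0:ℝ) ≤ (K:ℝ) := K.coe_nonneg
    have := mono_ftc hgcont hgmono hab hK hgd
    simp only [hg] at this
    nlinarith
  have h1 := key f hf hd
  have h2 : 0 ≤ (fun t => -f t) b - (fun t => -f t) a := by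
    refine key _ hf.neg ?_
    filter_upwards [hd] with t ht hmem
    simpa using (ht hmem).neg
  simp only at h2
  linarith

/-- Lipschitz bound for a primitive with a pointwise-bounded integrand. -/
lemma lipschitz_primitive {E : Type*} [NormedAddCommGroup E] [NormedSpace ℝ E]
    {f : ℝ → E} {C : ℝ} (hf : Integrable f volume) (hC : ∀ s, ‖f s‖ ≤ C) :
    LipschitzWith C.toNNReal (fun x => ∫ s in (0:ℝ)..x, f s) := by
  have hC0 : 0 ≤ C := le_trans (norm_nonneg _) (hC 0)
  apply LipschitzWith.of_dist_le_mul
  intro x y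
  rw [dist_eq_norm, Real.coe_toNNReal _ hC0]
  have : (∫ s in (0:ℝ)..x, f s) - ∫ s in (0:ℝ)..y, f s = ∫ s in y..x, f s :=
    intervalIntegral.integral_interval_sub_left hf.intervalIntegrable
      hf.intervalIntegrable
  rw [this]
  have := intervalIntegral.norm_integral_le_of_norm_le_const
    (C := C) (f := f) (a := y) (b := x) (fun s _ => hC s)
  simpa [Real.dist_eq, abs_sub_comm] using this

/-- A.e. differentiability of primitives (Lebesgue differentiation). -/
lemma ae_hasDerivAt_primitive {E : Type*} [NormedAddCommGroup E] [NormedSpace ℝ E]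
    [CompleteSpace E] {f : ℝ → E} (hf : Integrable f volume) :
    ∀ᵐ t ∂volume, HasDerivAt (fun x => ∫ s in (0:ℝ)..x, f s) (f t) t := by
  filter_upwards [IsUnifLocDoublingMeasure.ae_tendsto_average_norm_sub
    (μ := volume) hf.locallyIntegrable (1:ℝ)] with t ht
  have havg : Tendsto (fun r => ⨍ y in Metric.closedBall t r, ‖f y - f t‖) (𝓝[>] 0) (𝓝 0) := by
    refine ht (fun _ => t) id (by simpa using Filter.tendsto_id) ?_
    filter_upwards [self_mem_nhdsWithin] with r hr
    exact Metric.mem_closedBall_self (by simp at hr ⊢; linarith [le_of_lt hr])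
  rw [hasDerivAt_iff_isLittleO]
  rw [Asymptotics.isLittleO_iff]
  intro ε hε
  have hev : ∀ᶠ r in 𝓝[>] (0:ℝ), ⨍ y in Metric.closedBall t r, ‖f y - f t‖ < ε / 2 := by
    exact havg.eventually (Filter.Tendsto.eventually_lt_const (by positivity) tendsto_id) |>.mono
      (fun r hr => hr)
  rw [eventually_nhdsWithin_iff] at hev
  rcases Metric.eventually_nhds_iff.1 hev with ⟨δ₀, hδ₀, hball⟩
  filter_upwards [Metric.ball_mem_nhds t hδ₀] with x hx
  rw [Metric.mem_ball] at hx
  rcases eq_or_ne x t with rfl | hne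
  · simp
  · set r := |x - t| with hr
    have hrpos : 0 < r := abs_pos.2 (sub_ne_zero.2 hne)
    have hrlt : r < δ₀ := by rwa [Real.dist_eq] at hx
    have havg_lt : ⨍ y in Metric.closedBall t r, ‖f y - f t‖ < ε / 2 := by
      have h1 : dist r 0 < δ₀ := by simp [Real.dist_eq, abs_of_pos hrpos]; exact hrlt
      exact hball h1 (mem_Ioi.2 hrpos)
    -- rewrite the difference as an integral
    have key : (∫ s in (0:ℝ)..x, f s) - (∫ s in (0:ℝ)..t, f s) - (x - t) • f t
        = ∫ s in t..x, (f s - f t) := by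
      rw [intervalIntegral.integral_sub hf.intervalIntegrable intervalIntegrable_const,
        intervalIntegral.integral_interval_sub_left hf.intervalIntegrable hf.intervalIntegrable,
        intervalIntegral.integral_const]
    rw [key]
    have hsub : Set.uIoc t x ⊆ Metric.closedBall t r := by
      intro s hs
      rcases le_or_gt t x with h | h
      · rw [uIoc_of_le h] at hs
        simp only [Metric.mem_closedBall, Real.dist_eq]
        rw [abs_of_nonneg (by linarith [hs.1.le] : (0:ℝ) ≤ s - t)]
        have : x - t = r := by rw [hr, abs_of_nonneg (by linarith)]
        linarith [hs.2]
      · rw [uIoc_of_ge h.le] at hs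
        simp only [Metric.mem_closedBall, Real.dist_eq]
        rw [abs_of_nonpos (by linarith [hs.2] : s - t ≤ 0)]
        have : t - x = r := by rw [hr, abs_of_nonpos (by linarith)]; ring
        linarith [hs.1]
    have hintcb : IntegrableOn (fun s => ‖f s - f t‖) (Metric.closedBall t r) volume :=
      (hf.integrableOn.sub (integrableOn_const measure_closedBall_lt_top.ne)).norm
    calc ‖∫ s in t..x, (f s - f t)‖
        ≤ ∫ s in Set.uIoc t x, ‖f s - f t‖ := intervalIntegral.norm_integral_le_integral_norm_uIoc
      _ ≤ ∫ s in Metric.closedBall t r, ‖f s - f t‖ := by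
          apply setIntegral_mono_set hintcb
          · exact Eventually.of_forall fun s => norm_nonneg _
          · exact hsub.eventuallyLE
      _ = (volume (Metric.closedBall t r)).toReal • ⨍ y in Metric.closedBall t r, ‖f y - f t‖ := by
          have h0 : (volume (Metric.closedBall t r)).toReal ≠ 0 := by
            rw [Real.volume_closedBall, ENNReal.toReal_ofReal (by positivity)]
            positivity
          rw [setAverage_eq, smul_smul, measureReal_def, mul_inv_cancel₀ h0, one_smul]
      _ ≤ (2 * r) * (ε / 2) := by
          rw [Real.volume_closedBall, ENNReal.toReal_ofReal (by positivity), smul_eq_mul]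
          exact mul_le_mul_of_nonneg_left havg_lt.le (by positivity)
      _ = ε * r := by ring
      _ = ε * ‖x - t‖ := by rw [hr, Real.norm_eq_abs]



/-- Almost every point of a measurable set is an accumulation point of it. -/
lemma ae_accumulation (E : Set ℝ) (hE : MeasurableSet E) :
    ∀ᵐ t ∂volume, t ∈ E → (𝓝[E \ {t}] t).NeBot := by
  have h := Besicovitch.ae_tendsto_measure_inter_div volume E
  rw [ae_restrict_iff' hE] at h
  filter_upwards [h] with t ht htE
  by_contra hbot
  rw [not_neBot] at hbot
  have hncl : t ∉ closure (E \ {t}) := by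
    rw [mem_closure_iff_nhdsWithin_neBot]
    intro h'; exact absurd hbot h'.ne
  have : IsOpen (closure (E \ {t}))ᶜ := isClosed_closure.isOpen_compl
  rcases Metric.isOpen_iff.1 this t hncl with ⟨ε, hε, hball⟩
  have hsub : ∀ r, 0 < r → r < ε → E ∩ Metric.closedBall t r ⊆ {t} := by
    intro r hr hrε y hy
    by_contra hyt
    have hy1 : y ∈ Metric.ball t ε := by
      have := hy.2
      simp only [Metric.mem_closedBall] at this
      simp only [Metric.mem_ball]
      linarith
    have : y ∈ (closure (E \ {t}))ᶜ := hball hy1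
    exact this (subset_closure ⟨hy.1, hyt⟩)
  have hev1 : ∀ᶠ r in 𝓝[>] (0:ℝ),
      volume (E ∩ Metric.closedBall t r) / volume (Metric.closedBall t r) = 0 := by
    filter_upwards [Ioo_mem_nhdsGT_of_mem (by constructor <;> linarith : (0:ℝ) ∈ Ico 0 ε)]
      with r hr
    have h0 : volume (E ∩ Metric.closedBall t r) = 0 :=
      le_antisymm (le_trans (measure_mono (hsub r hr.1 hr.2)) (by simp)) (by simp)
    rw [h0, ENNReal.zero_div]
  have h2 := ht htE
  have h3 : Tendsto (fun _ : ℝ => (0:ENNReal)) (𝓝[>] (0:ℝ)) (𝓝 1) := by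
    refine h2.congr' ?_
    filter_upwards [hev1] with r hr
    exact hr
  have := tendsto_nhds_unique h3 tendsto_const_nhds
  simp at this

lemma deriv_zero_of_acc {f : ℝ → ℝ} {E : Set ℝ} {t d : ℝ} (hfE : ∀ s ∈ E, f s = 0)
    (htE : f t = 0) (hacc : (𝓝[E \ {t}] t).NeBot) (hd : HasDerivAt f d t) : d = 0 := by
  have h1 : Tendsto (slope f t) (𝓝[≠] t) (𝓝 d) := hasDerivAt_iff_tendsto_slope.1 hd
  have hle : 𝓝[E \ {t}] t ≤ 𝓝[≠] t :=
    nhdsWithin_mono t (fun s hs => hs.2)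
  have h2 : Tendsto (slope f t) (𝓝[E \ {t}] t) (𝓝 d) := h1.mono_left hle
  have h3 : Tendsto (slope f t) (𝓝[E \ {t}] t) (𝓝 0) := by
    have hev : ∀ᶠ s in 𝓝[E \ {t}] t, slope f t s = 0 := by
      filter_upwards [self_mem_nhdsWithin] with s hs
      rw [slope_def_field, hfE s hs.1, htE]
      simp
    exact Tendsto.congr' (hev.mono fun s hs => hs.symm) tendsto_const_nhds
  exact tendsto_nhds_unique h2 h3

lemma control_sign {a b x y : ℝ} (ha : |a| ≤ 1) (hb : |b| ≤ 1)
    (heq : a * x + b * y = |x| + |y|) : a * x = |x| ∧ b * y = |y| := by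
  have h1 : a * x ≤ |x| := by
    calc a * x ≤ |a * x| := le_abs_self _
      _ = |a| * |x| := abs_mul _ _
      _ ≤ 1 * |x| := mul_le_mul_of_nonneg_right ha (abs_nonneg _)
      _ = |x| := one_mul _
  have h2 : b * y ≤ |y| := by
    calc b * y ≤ |b * y| := le_abs_self _
      _ = |b| * |y| := abs_mul _ _
      _ ≤ 1 * |y| := mul_le_mul_of_nonneg_right hb (abs_nonneg _)
      _ = |y| := one_mul _
  constructor <;> linarith

lemma abs_one_of_mul_abs {a x : ℝ} (h : a * x = |x|) (hx : x ≠ 0) : a = 1 ∨ a = -1 := by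
  rcases lt_or_gt_of_ne hx with h' | h'
  · right
    have : a * x = -x := by rw [h, abs_of_neg h']
    have := mul_right_cancel₀ hx (by linarith : a * x = (-1) * x)
    exact this
  · left
    have : a * x = x := by rw [h, abs_of_pos h']
    exact mul_right_cancel₀ hx (by linarith : a * x = 1 * x)

lemma eq_sign_of_mul_abs {a x c : ℝ} (h : a * x = |x|) (hc : c = 1 ∨ c = -1)
    (hcx : 0 < c * x) : a = c := by
  have hx : x ≠ 0 := by
    intro h0; rw [h0] at hcx; simp at hcx
  have hcx' : c * x = |x| := by
    rcases hc with rfl | rfl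
    · rw [one_mul] at hcx ⊢; exact (abs_of_pos hcx).symm
    · have : x < 0 := by nlinarith
      rw [abs_of_neg this]; linarith
  have : (a - c) * x = 0 := by rw [sub_mul, h, hcx']; ring
  rcases mul_eq_zero.1 this with h' | h'
  · linarith [sub_eq_zero.1 h']
  · exact absurd h' hx

lemma abs_hasDerivAt_zero {f : ℝ → ℝ} {x : ℝ} (hf : HasDerivAt f 0 x) (hx : f x = 0) :
    HasDerivAt (fun y => |f y|) 0 x := by
  rw [hasDerivAt_iff_isLittleO] at hf ⊢
  have := hf.norm_left
  refine this.congr' ?_ (EventuallyEq.refl _ _)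
  refine Eventually.of_forall fun y => ?_
  simp [hx, Real.norm_eq_abs, abs_abs]

lemma abs_eventually_eq {f : ℝ → ℝ} {c t : ℝ} (hc : c = 1 ∨ c = -1) (hf : Continuous f)
    (hpos : 0 < c * f t) : (fun y => |f y|) =ᶠ[𝓝 t] fun y => c * f y := by
  have hcont : Continuous fun y => c * f y := continuous_const.mul hf
  have hev : ∀ᶠ y in 𝓝 t, 0 < c * f y :=
    (hcont.tendsto t).eventually (eventually_gt_nhds hpos)
  filter_upwards [hev] with y hy
  rcases hc with rfl | rfl
  · rw [one_mul] at hy ⊢; exact abs_of_pos hy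
  · have : f y < 0 := by nlinarith
    rw [abs_of_neg this]; ring


lemma real_lip {f : ℝ → ℝ} {C : ℝ} (hC : 0 ≤ C) (h : ∀ s t, |f t - f s| ≤ C * |t - s|) :
    LipschitzWith C.toNNReal f := by
  apply LipschitzWith.of_dist_le_mul
  intro x y
  rw [Real.dist_eq, Real.dist_eq, Real.coe_toNNReal _ hC]
  exact h y x

lemma inner_lip {f g : ℝ → EuclideanSpace ℝ (Fin 3)} {Kf Kg Mf Mg : ℝ}
    (hKf : ∀ s t, ‖f t - f s‖ ≤ Kf * |t - s|) (hKg : ∀ s t, ‖g t - g s‖ ≤ Kg * |t - s|)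
    (hMf : ∀ t, ‖f t‖ ≤ Mf) (hMg : ∀ t, ‖g t‖ ≤ Mg) (s t : ℝ) :
    |⟪f t, g t⟫ - ⟪f s, g s⟫| ≤ (Kf * Mg + Mf * Kg) * |t - s| := by
  have key : ⟪f t, g t⟫ - ⟪f s, g s⟫ = ⟪f t - f s, g t⟫ + ⟪f s, g t - g s⟫ := by
    rw [inner_sub_left, inner_sub_right]; ring
  rw [key]
  have h1 : |⟪f t - f s, g t⟫| ≤ ‖f t - f s‖ * ‖g t‖ := abs_real_inner_le_norm _ _
  have h2 : |⟪f s, g t - g s⟫| ≤ ‖f s‖ * ‖g t - g s‖ := abs_real_inner_le_norm _ _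
  have h3 : ‖f t - f s‖ * ‖g t‖ ≤ (Kf * |t - s|) * Mg := by
    apply mul_le_mul (hKf s t) (hMg t) (norm_nonneg _)
    calc (0:ℝ) ≤ ‖f t - f s‖ := norm_nonneg _
      _ ≤ Kf * |t - s| := hKf s t
  have h4 : ‖f s‖ * ‖g t - g s‖ ≤ Mf * (Kg * |t - s|) := by
    apply mul_le_mul (hMf s) (hKg s t) (norm_nonneg _)
    calc (0:ℝ) ≤ ‖f s‖ := norm_nonneg _
      _ ≤ Mf := hMf s
  calc |⟪f t - f s, g t⟫ + ⟪f s, g t - g s⟫|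
      ≤ |⟪f t - f s, g t⟫| + |⟪f s, g t - g s⟫| := abs_add_le _ _
    _ ≤ (Kf * |t - s|) * Mg + Mf * (Kg * |t - s|) := by linarith
    _ = (Kf * Mg + Mf * Kg) * |t - s| := by ring

end Helpers

open Filter Topology

set_option maxHeartbeats 2000000 in
/-- If `X₁, X₂, [X₁,X₂]` are linearly independent on the closure of
a bounded open set `Ω`, then there is `T > 0` such that every time-optimal trajectory
contained in `Ω` of duration `T' ≤ T` admitting an extremal lift whose bracket
function `φ₁₂` never vanishes is bang-bang. -/
theorem statement_17 (X₁ X₂ : E3 → E3) (hX₁ : ContDiff ℝ (⊤ : ℕ∞) X₁)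
    (hX₂ : ContDiff ℝ (⊤ : ℕ∞) X₂) (Ω : Set E3) (hΩopen : IsOpen Ω)
    (hΩbdd : Bornology.IsBounded Ω)
    (hli : ∀ x ∈ closure Ω, LinearIndependent ℝ ![X₁ x, X₂ x, X12 X₁ X₂ x]) :
    ∃ T > (0:ℝ), ∀ (T' : ℝ) (q : ℝ → E3) (u : ℝ → ℝ × ℝ) (lam : ℝ → E3),
      0 < T' → T' ≤ T → IsAdmissiblePair X₁ X₂ T' q u →
      (∀ t ∈ Icc (0:ℝ) T', q t ∈ Ω) → IsTimeOptimal X₁ X₂ T' q →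
      IsExtremalLift X₁ X₂ T' q u lam →
      (∀ t ∈ Icc (0:ℝ) T', phiF (X12 X₁ X₂) q lam t ≠ 0) →
      IsBangBang T' (phiF X₁ q lam) (phiF X₂ q lam) := by
  refine ⟨1, one_pos, ?_⟩
  intro T' q u lam hT'pos _hT'le hadm hqΩ hopt hlift hbr
  obtain ⟨hT'0, humeas, hubdd, hvint, hqrep⟩ := hadm
  obtain ⟨_hlamne, haint, hlamrep, hmaxi⟩ := hlift
  set vel : ℝ → E3 := fun s => (u s).1 • X₁ (q s) + (u s).2 • X₂ (q s) with hvel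
  set F : ℝ → E3 := Set.indicator (Icc 0 T') vel with hF
  have hFint : Integrable F volume := (integrable_indicator_iff measurableSet_Icc).2 hvint
  set A : ℝ → E3 := Set.indicator (Icc 0 T') (adjVec X₁ X₂ u q lam) with hA
  have hAint : Integrable A volume := (integrable_indicator_iff measurableSet_Icc).2 haint
  set qt : ℝ → E3 := fun t => q 0 + ∫ s in (0:ℝ)..t, F s with hqt
  set lamt : ℝ → E3 := fun t => lam 0 + ∫ s in (0:ℝ)..t, A s with hlamt
  have h0Icc : (0:ℝ) ∈ Icc (0:ℝ) T' := ⟨le_refl 0, hT'0⟩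
  -- primitive of an indicator equals the set integral over `Icc 0 t`
  have hprim : ∀ (f : ℝ → E3), IntegrableOn f (Icc (0:ℝ) T') volume → ∀ t ∈ Icc (0:ℝ) T',
      (∫ s in (0:ℝ)..t, Set.indicator (Icc (0:ℝ) T') f s) = ∫ s in Icc (0:ℝ) t, f s := by
    intro f _hf t ht
    rw [intervalIntegral.integral_of_le ht.1, integral_Icc_eq_integral_Ioc]
    apply setIntegral_congr_fun measurableSet_Ioc
    intro s hs
    exact Set.indicator_of_mem (Set.mem_Icc.2 ⟨le_of_lt hs.1, le_trans hs.2 ht.2⟩) f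
  have hqeq : ∀ t ∈ Icc (0:ℝ) T', qt t = q t := by
    intro t ht
    rw [hqt, hF]
    simp only
    rw [hprim vel hvint t ht, ← hqrep t ht]
  have hlameq : ∀ t ∈ Icc (0:ℝ) T', lamt t = lam t := by
    intro t ht
    rw [hlamt, hA]
    simp only
    rw [hprim _ haint t ht, ← hlamrep t ht]
  have hqtc : Continuous qt := by
    rw [hqt]; exact continuous_const.add (hFint.continuous_primitive 0)
  have hlamtc : Continuous lamt := by
    rw [hlamt]; exact continuous_const.add (hAint.continuous_primitive 0)
  -- clamping of primitives of indicators
  have hclamp : ∀ (f : ℝ → E3), Integrable (Set.indicator (Icc (0:ℝ) T') f) volume → ∀ t : ℝ,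
      (∫ s in (0:ℝ)..t, Set.indicator (Icc (0:ℝ) T') f s)
        = ∫ s in (0:ℝ)..(min (max t 0) T'), Set.indicator (Icc (0:ℝ) T') f s := by
    intro f hf t
    have hnull : ∀ a b : ℝ, a ≤ b → (∀ s ∈ Set.Ioo (0:ℝ) T', s ∉ Set.Ioc a b) →
        (∫ s in a..b, Set.indicator (Icc (0:ℝ) T') f s) = 0 := by
      intro a b h hab
      rw [intervalIntegral.integral_of_le h]
      apply integral_eq_zero_of_ae
      have h0 : ∀ᵐ s ∂(volume.restrict (Set.Ioc a b)), s ≠ (0:ℝ) :=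
        ae_restrict_of_ae (by
          simpa using (measure_eq_zero_iff_ae_notMem (μ := volume)).1
            (Real.volume_singleton (a := (0:ℝ))))
      have hT : ∀ᵐ s ∂(volume.restrict (Set.Ioc a b)), s ≠ T' :=
        ae_restrict_of_ae (by
          simpa using (measure_eq_zero_iff_ae_notMem (μ := volume)).1
            (Real.volume_singleton (a := T')))
      filter_upwards [h0, hT, ae_restrict_mem measurableSet_Ioc] with s h1 h2 h3
      apply Set.indicator_of_notMem
      intro hmem
      rw [Set.mem_Icc] at hmem
      exact hab s (Set.mem_Ioo.2 ⟨lt_of_le_of_ne hmem.1 (Ne.symm h1),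
        lt_of_le_of_ne hmem.2 h2⟩) h3
    rcases le_or_gt t 0 with h | h
    · have h1 : min (max t 0) T' = 0 := by rw [max_eq_right h, min_eq_left hT'0]
      rw [h1, intervalIntegral.integral_same]
      rw [intervalIntegral.integral_symm]
      rw [hnull t 0 h (fun s hs hmem => absurd hs.1 (not_lt.2 hmem.2)), neg_zero]
    rcases le_or_gt t T' with h2 | h2
    · rw [max_eq_left h.le, min_eq_left h2]
    · have h1 : min (max t 0) T' = T' := by rw [max_eq_left h.le, min_eq_right h2.le]
      rw [h1]
      have hsplit : (∫ s in (0:ℝ)..t, Set.indicator (Icc (0:ℝ) T') f s)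
          = (∫ s in (0:ℝ)..T', Set.indicator (Icc (0:ℝ) T') f s)
            + ∫ s in T'..t, Set.indicator (Icc (0:ℝ) T') f s :=
        (intervalIntegral.integral_add_adjacent_intervals hf.intervalIntegrable
          hf.intervalIntegrable).symm
      rw [hsplit, hnull T' t h2.le (fun s hs hmem => absurd hmem.1 (not_lt.2 hs.2.le)), add_zero]
  have hclampmem : ∀ t : ℝ, min (max t 0) T' ∈ Icc (0:ℝ) T' :=
    fun t => Set.mem_Icc.2 ⟨le_min (le_max_right t 0) hT'0, min_le_right _ _⟩
  have hqclamp : ∀ t, qt t = qt (min (max t 0) T') := by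
    intro t; rw [hqt]; simp only; rw [hclamp vel (by rw [hF] at hFint; exact hFint) t]
  have hlamclamp : ∀ t, lamt t = lamt (min (max t 0) T') := by
    intro t; rw [hlamt]; simp only
    rw [hclamp (adjVec X₁ X₂ u q lam) (by rw [hA] at hAint; exact hAint) t]
  -- compact range, bounds
  obtain ⟨R, hR⟩ := (isCompact_Icc.image hqtc).isBounded.subset_closedBall 0
  have hBcomp : IsCompact (Metric.closedBall (0:E3) R) := isCompact_closedBall 0 R
  have hBconv : Convex ℝ (Metric.closedBall (0:E3) R) := convex_closedBall 0 R
  have hqtB : ∀ t, qt t ∈ Metric.closedBall (0:E3) R := by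
    intro t; rw [hqclamp t]; exact hR ⟨_, hclampmem t, rfl⟩
  obtain ⟨M₁, hM₁⟩ := hBcomp.exists_bound_of_continuousOn hX₁.continuous.continuousOn
  obtain ⟨M₂, hM₂⟩ := hBcomp.exists_bound_of_continuousOn hX₂.continuous.continuousOn
  obtain ⟨D₁, hD₁⟩ := hBcomp.exists_bound_of_continuousOn
    (hX₁.continuous_fderiv (by simp)).continuousOn
  obtain ⟨D₂, hD₂⟩ := hBcomp.exists_bound_of_continuousOn
    (hX₂.continuous_fderiv (by simp)).continuousOn
  have hM₁0 : 0 ≤ M₁ := le_trans (norm_nonneg _) (hM₁ _ (hqtB 0))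
  have hM₂0 : 0 ≤ M₂ := le_trans (norm_nonneg _) (hM₂ _ (hqtB 0))
  have hD₁0 : 0 ≤ D₁ := le_trans (norm_nonneg _) (hD₁ _ (hqtB 0))
  have hD₂0 : 0 ≤ D₂ := le_trans (norm_nonneg _) (hD₂ _ (hqtB 0))
  obtain ⟨Λ, hΛ'⟩ := (isCompact_Icc.image hlamtc).exists_bound_of_continuousOn
    continuous_id.continuousOn
  have hΛ : ∀ t, ‖lamt t‖ ≤ Λ := by
    intro t; rw [hlamclamp t]
    exact hΛ' _ ⟨_, hclampmem t, rfl⟩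
  have hΛ0 : 0 ≤ Λ := le_trans (norm_nonneg _) (hΛ 0)
  -- bounds on the integrands
  have hFbd : ∀ s, ‖F s‖ ≤ M₁ + M₂ := by
    intro s; by_cases hs : s ∈ Icc (0:ℝ) T'
    · rw [hF, Set.indicator_of_mem hs]
      have hq : q s = qt s := (hqeq s hs).symm
      have h1 : ‖(u s).1 • X₁ (q s)‖ ≤ 1 * M₁ := by
        rw [norm_smul, Real.norm_eq_abs]
        apply mul_le_mul (hubdd s hs).1 _ (norm_nonneg _) one_pos.le
        rw [hq]; exact hM₁ _ (hqtB s)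
      have h2 : ‖(u s).2 • X₂ (q s)‖ ≤ 1 * M₂ := by
        rw [norm_smul, Real.norm_eq_abs]
        apply mul_le_mul (hubdd s hs).2 _ (norm_nonneg _) one_pos.le
        rw [hq]; exact hM₂ _ (hqtB s)
      calc ‖vel s‖ ≤ ‖(u s).1 • X₁ (q s)‖ + ‖(u s).2 • X₂ (q s)‖ := norm_add_le _ _
        _ ≤ 1 * M₁ + 1 * M₂ := by linarith
        _ = M₁ + M₂ := by ring
    · rw [hF, Set.indicator_of_notMem hs]; simp; linarith
  have hAbd : ∀ s, ‖A s‖ ≤ (D₁ + D₂) * Λ := by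
    intro s; by_cases hs : s ∈ Icc (0:ℝ) T'
    · rw [hA, Set.indicator_of_mem hs]
      have hq : q s = qt s := (hqeq s hs).symm
      have hl : lam s = lamt s := (hlameq s hs).symm
      show ‖-(ContinuousLinearMap.adjoint
        ((u s).1 • fderiv ℝ X₁ (q s) + (u s).2 • fderiv ℝ X₂ (q s)) (lam s))‖ ≤ (D₁ + D₂) * Λ
      rw [norm_neg]
      have hM : ‖(u s).1 • fderiv ℝ X₁ (q s) + (u s).2 • fderiv ℝ X₂ (q s)‖ ≤ D₁ + D₂ := by
        have e1 : ‖(u s).1 • fderiv ℝ X₁ (q s)‖ ≤ 1 * D₁ := by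
          rw [norm_smul, Real.norm_eq_abs]
          apply mul_le_mul (hubdd s hs).1 _ (norm_nonneg _) one_pos.le
          rw [hq]; exact hD₁ _ (hqtB s)
        have e2 : ‖(u s).2 • fderiv ℝ X₂ (q s)‖ ≤ 1 * D₂ := by
          rw [norm_smul, Real.norm_eq_abs]
          apply mul_le_mul (hubdd s hs).2 _ (norm_nonneg _) one_pos.le
          rw [hq]; exact hD₂ _ (hqtB s)
        calc ‖(u s).1 • fderiv ℝ X₁ (q s) + (u s).2 • fderiv ℝ X₂ (q s)‖
            ≤ ‖(u s).1 • fderiv ℝ X₁ (q s)‖ + ‖(u s).2 • fderiv ℝ X₂ (q s)‖ := norm_add_le _ _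
          _ ≤ 1 * D₁ + 1 * D₂ := by linarith
          _ = D₁ + D₂ := by ring
      calc ‖ContinuousLinearMap.adjoint
            ((u s).1 • fderiv ℝ X₁ (q s) + (u s).2 • fderiv ℝ X₂ (q s)) (lam s)‖
          ≤ ‖ContinuousLinearMap.adjoint
            ((u s).1 • fderiv ℝ X₁ (q s) + (u s).2 • fderiv ℝ X₂ (q s))‖ * ‖lam s‖ :=
            ContinuousLinearMap.le_opNorm _ _
        _ = ‖(u s).1 • fderiv ℝ X₁ (q s) + (u s).2 • fderiv ℝ X₂ (q s)‖ * ‖lam s‖ := by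
            rw [LinearIsometryEquiv.norm_map]
        _ ≤ (D₁ + D₂) * Λ := by
            apply mul_le_mul hM _ (norm_nonneg _) (by linarith)
            rw [hl]; exact hΛ s
    · rw [hA, Set.indicator_of_notMem hs]; simp; positivity
  -- Lipschitz estimates
  have hqtlipd : ∀ s t : ℝ, ‖qt t - qt s‖ ≤ (M₁ + M₂) * |t - s| := by
    intro s t
    have := (lipschitz_primitive hFint hFbd).dist_le_mul t s
    rw [dist_eq_norm, Real.dist_eq, Real.coe_toNNReal _ (by linarith)] at this
    calc ‖qt t - qt s‖ = ‖(∫ r in (0:ℝ)..t, F r) - ∫ r in (0:ℝ)..s, F r‖ := by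
          rw [hqt]; simp only; rw [add_sub_add_left_eq_sub]
      _ ≤ (M₁ + M₂) * |t - s| := this
  have hlamlipd : ∀ s t : ℝ, ‖lamt t - lamt s‖ ≤ ((D₁ + D₂) * Λ) * |t - s| := by
    intro s t
    have := (lipschitz_primitive hAint hAbd).dist_le_mul t s
    rw [dist_eq_norm, Real.dist_eq,
      Real.coe_toNNReal _ (by positivity)] at this
    calc ‖lamt t - lamt s‖ = ‖(∫ r in (0:ℝ)..t, A r) - ∫ r in (0:ℝ)..s, A r‖ := by
          rw [hlamt]; simp only; rw [add_sub_add_left_eq_sub]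
      _ ≤ ((D₁ + D₂) * Λ) * |t - s| := this
  have hX1lipd : ∀ s t : ℝ, ‖X₁ (qt t) - X₁ (qt s)‖ ≤ (D₁ * (M₁ + M₂)) * |t - s| := by
    intro s t
    calc ‖X₁ (qt t) - X₁ (qt s)‖ ≤ D₁ * ‖qt t - qt s‖ :=
          hBconv.norm_image_sub_le_of_norm_fderiv_le
            (fun x _ => (hX₁.differentiable (by simp)).differentiableAt) hD₁ (hqtB s) (hqtB t)
      _ ≤ D₁ * ((M₁ + M₂) * |t - s|) := mul_le_mul_of_nonneg_left (hqtlipd s t) hD₁0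
      _ = (D₁ * (M₁ + M₂)) * |t - s| := by ring
  have hX2lipd : ∀ s t : ℝ, ‖X₂ (qt t) - X₂ (qt s)‖ ≤ (D₂ * (M₁ + M₂)) * |t - s| := by
    intro s t
    calc ‖X₂ (qt t) - X₂ (qt s)‖ ≤ D₂ * ‖qt t - qt s‖ :=
          hBconv.norm_image_sub_le_of_norm_fderiv_le
            (fun x _ => (hX₂.differentiable (by simp)).differentiableAt) hD₂ (hqtB s) (hqtB t)
      _ ≤ D₂ * ((M₁ + M₂) * |t - s|) := mul_le_mul_of_nonneg_left (hqtlipd s t) hD₂0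
      _ = (D₂ * (M₁ + M₂)) * |t - s| := by ring
  -- switching functions
  set phi1 : ℝ → ℝ := fun t => ⟪lamt t, X₁ (qt t)⟫ with hphi1def
  set phi2 : ℝ → ℝ := fun t => ⟪lamt t, X₂ (qt t)⟫ with hphi2def
  set Phi12 : ℝ → ℝ := fun t => ⟪lamt t, X12 X₁ X₂ (qt t)⟫ with hPhi12def
  set C1 : ℝ := ((D₁ + D₂) * Λ) * M₁ + Λ * (D₁ * (M₁ + M₂)) with hC1
  set C2 : ℝ := ((D₁ + D₂) * Λ) * M₂ + Λ * (D₂ * (M₁ + M₂)) with hC2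
  have hC10 : 0 ≤ C1 := by rw [hC1]; positivity
  have hC20 : 0 ≤ C2 := by rw [hC2]; positivity
  have hphi1lipd : ∀ s t : ℝ, |phi1 t - phi1 s| ≤ C1 * |t - s| := by
    intro s t
    exact inner_lip hlamlipd hX1lipd hΛ (fun r => hM₁ _ (hqtB r)) s t
  have hphi2lipd : ∀ s t : ℝ, |phi2 t - phi2 s| ≤ C2 * |t - s| := by
    intro s t
    exact inner_lip hlamlipd hX2lipd hΛ (fun r => hM₂ _ (hqtB r)) s t
  have hphi1lip : LipschitzWith C1.toNNReal phi1 := real_lip hC10 hphi1lipd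
  have hphi2lip : LipschitzWith C2.toNNReal phi2 := real_lip hC20 hphi2lipd
  have hphi1cont : Continuous phi1 := hphi1lip.continuous
  have hphi2cont : Continuous phi2 := hphi2lip.continuous
  have hX12cont : Continuous (X12 X₁ X₂) := by
    have h1 : Continuous fun x => (fderiv ℝ X₂ x) (X₁ x) :=
      (hX₂.continuous_fderiv (by simp)).clm_apply hX₁.continuous
    have h2 : Continuous fun x => (fderiv ℝ X₁ x) (X₂ x) :=
      (hX₁.continuous_fderiv (by simp)).clm_apply hX₂.continuous
    exact h1.sub h2
  have hPhicont : Continuous Phi12 := by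
    rw [hPhi12def]
    exact Continuous.inner hlamtc (hX12cont.comp hqtc)
  obtain ⟨MP, hMP'⟩ := (isCompact_Icc (a := (0:ℝ)) (b := T')).exists_bound_of_continuousOn
    hPhicont.continuousOn
  have hMP : ∀ r ∈ Icc (0:ℝ) T', |Phi12 r| ≤ MP := by
    intro r hr; rw [← Real.norm_eq_abs]; exact hMP' r hr
  have hMP0 : 0 ≤ MP := le_trans (abs_nonneg _) (hMP 0 h0Icc)
  -- relating to the statement's switching functions
  have hphiF1 : ∀ r ∈ Icc (0:ℝ) T', phiF X₁ q lam r = phi1 r := by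
    intro r hr; rw [hphi1def]; simp only [phiF]; rw [hqeq r hr, hlameq r hr]
  have hphiF2 : ∀ r ∈ Icc (0:ℝ) T', phiF X₂ q lam r = phi2 r := by
    intro r hr; rw [hphi2def]; simp only [phiF]; rw [hqeq r hr, hlameq r hr]
  have hPhine : ∀ r ∈ Icc (0:ℝ) T', Phi12 r ≠ 0 := by
    intro r hr
    have := hbr r hr
    rw [hPhi12def]; simp only [phiF] at this ⊢
    rw [hqeq r hr, hlameq r hr]; exact this
  -- a.e. facts
  have hmax' : ∀ᵐ t ∂volume, t ∈ Ioo (0:ℝ) T' →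
      (u t).1 * phi1 t + (u t).2 * phi2 t = |phi1 t| + |phi2 t| := by
    filter_upwards [hmaxi] with t hm ht
    have hle := hm (Ioo_subset_Icc_self ht)
    rw [hphi1def, hphi2def]; simp only
    rw [hqeq t (Ioo_subset_Icc_self ht), hlameq t (Ioo_subset_Icc_self ht)]
    exact hle
  have hqtderiv : ∀ᵐ t ∂volume, t ∈ Ioo (0:ℝ) T' → HasDerivAt qt (vel t) t := by
    filter_upwards [ae_hasDerivAt_primitive hFint] with t hp ht
    have h1 := hp.const_add (q 0)
    have hFt : F t = vel t := by rw [hF]; exact Set.indicator_of_mem (Ioo_subset_Icc_self ht) vel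
    rw [hqt]
    rw [hFt] at h1
    exact h1
  have hlamtderiv : ∀ᵐ t ∂volume, t ∈ Ioo (0:ℝ) T' →
      HasDerivAt lamt (adjVec X₁ X₂ u q lam t) t := by
    filter_upwards [ae_hasDerivAt_primitive hAint] with t hp ht
    have h1 := hp.const_add (lam 0)
    have hAt : A t = adjVec X₁ X₂ u q lam t := by
      rw [hA]; exact Set.indicator_of_mem (Ioo_subset_Icc_self ht) _
    rw [hlamt]
    rw [hAt] at h1
    exact h1
  have hphi1d : ∀ᵐ t ∂volume, t ∈ Ioo (0:ℝ) T' →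
      HasDerivAt phi1 (-((u t).2 * Phi12 t)) t := by
    filter_upwards [hqtderiv, hlamtderiv] with t h1 h2 ht
    have htIcc := Ioo_subset_Icc_self ht
    have hq' := h1 ht
    have hl' := h2 ht
    have hcomp : HasDerivAt (fun s => X₁ (qt s)) (fderiv ℝ X₁ (qt t) (vel t)) t :=
      ((hX₁.differentiable (by simp)) (qt t)).hasFDerivAt.comp_hasDerivAt t hq'
    have hinner := HasDerivAt.inner ℝ hl' hcomp
    have hval : (⟪lamt t, fderiv ℝ X₁ (qt t) (vel t)⟫
        + ⟪adjVec X₁ X₂ u q lam t, X₁ (qt t)⟫) = -((u t).2 * Phi12 t) := by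
      have e1 : q t = qt t := (hqeq t htIcc).symm
      have e2 : lam t = lamt t := (hlameq t htIcc).symm
      rw [hPhi12def]
      simp only [adjVec, X12, lieBracketVF, hvel]
      rw [← e1, ← e2]
      rw [inner_neg_left, ContinuousLinearMap.adjoint_inner_left]
      simp only [ContinuousLinearMap.add_apply, ContinuousLinearMap.coe_smul',
        Pi.smul_apply, map_add, _root_.map_smul, inner_add_right, inner_sub_right,
        real_inner_smul_right, inner_add_left, inner_smul_left, RCLike.conj_to_real]
      ring
    rw [hphi1def]
    rw [hval] at hinner
    exact hinner
  have hphi2d : ∀ᵐ t ∂volume, t ∈ Ioo (0:ℝ) T' →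
      HasDerivAt phi2 ((u t).1 * Phi12 t) t := by
    filter_upwards [hqtderiv, hlamtderiv] with t h1 h2 ht
    have htIcc := Ioo_subset_Icc_self ht
    have hq' := h1 ht
    have hl' := h2 ht
    have hcomp : HasDerivAt (fun s => X₂ (qt s)) (fderiv ℝ X₂ (qt t) (vel t)) t :=
      ((hX₂.differentiable (by simp)) (qt t)).hasFDerivAt.comp_hasDerivAt t hq'
    have hinner := HasDerivAt.inner ℝ hl' hcomp
    have hval : (⟪lamt t, fderiv ℝ X₂ (qt t) (vel t)⟫
        + ⟪adjVec X₁ X₂ u q lam t, X₂ (qt t)⟫) = (u t).1 * Phi12 t := by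
      have e1 : q t = qt t := (hqeq t htIcc).symm
      have e2 : lam t = lamt t := (hlameq t htIcc).symm
      rw [hPhi12def]
      simp only [adjVec, X12, lieBracketVF, hvel]
      rw [← e1, ← e2]
      rw [inner_neg_left, ContinuousLinearMap.adjoint_inner_left]
      simp only [ContinuousLinearMap.add_apply, ContinuousLinearMap.coe_smul',
        Pi.smul_apply, map_add, _root_.map_smul, inner_add_right, inner_sub_right,
        real_inner_smul_right, inner_add_left, inner_smul_left, RCLike.conj_to_real]
      ring
    rw [hphi2def]
    rw [hval] at hinner
    exact hinner
  -- exceptional sets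
  set E1 : Set ℝ := (Ioo (0:ℝ) T' ∩ phi1 ⁻¹' {0}) ∩ (phi2 ⁻¹' {0})ᶜ with hE1def
  set E2 : Set ℝ := (Ioo (0:ℝ) T' ∩ phi2 ⁻¹' {0}) ∩ (phi1 ⁻¹' {0})ᶜ with hE2def
  set ED : Set ℝ := (Ioo (0:ℝ) T' ∩ phi1 ⁻¹' {0}) ∩ phi2 ⁻¹' {0} with hEDdef
  have hE1mem : ∀ t, t ∈ E1 ↔ t ∈ Ioo (0:ℝ) T' ∧ phi1 t = 0 ∧ phi2 t ≠ 0 := by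
    intro t; rw [hE1def]; simp [and_assoc]
  have hE2mem : ∀ t, t ∈ E2 ↔ t ∈ Ioo (0:ℝ) T' ∧ phi2 t = 0 ∧ phi1 t ≠ 0 := by
    intro t; rw [hE2def]; simp [and_assoc]
  have hEDmem : ∀ t, t ∈ ED ↔ t ∈ Ioo (0:ℝ) T' ∧ phi1 t = 0 ∧ phi2 t = 0 := by
    intro t; rw [hEDdef]; simp [and_assoc]
  have hE1meas : MeasurableSet E1 :=
    ((measurableSet_Ioo.inter (hphi1cont.measurable (measurableSet_singleton 0))).inter
      (hphi2cont.measurable (measurableSet_singleton 0)).compl)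
  have hE2meas : MeasurableSet E2 :=
    ((measurableSet_Ioo.inter (hphi2cont.measurable (measurableSet_singleton 0))).inter
      (hphi1cont.measurable (measurableSet_singleton 0)).compl)
  have hEDmeas : MeasurableSet ED :=
    ((measurableSet_Ioo.inter (hphi1cont.measurable (measurableSet_singleton 0))).inter
      (hphi2cont.measurable (measurableSet_singleton 0)))
  have hE1ae : ∀ᵐ t ∂volume, t ∉ E1 := by
    filter_upwards [ae_accumulation E1 hE1meas, hphi1d, hmax'] with t hacc hd hm htE1
    obtain ⟨htIoo, h10, h2ne⟩ := (hE1mem t).1 htE1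
    have hder := hd htIoo
    have hzero : ∀ s ∈ E1, phi1 s = 0 := fun s hs => ((hE1mem s).1 hs).2.1
    have hd0 : -((u t).2 * Phi12 t) = 0 :=
      deriv_zero_of_acc hzero h10 (hacc htE1) hder
    have h := hm htIoo
    rw [h10] at h
    simp only [mul_zero, zero_add, abs_zero] at h
    have hPne := hPhine t (Ioo_subset_Icc_self htIoo)
    rw [neg_eq_zero, mul_eq_zero] at hd0
    rcases hd0 with h0 | h0
    · rcases abs_one_of_mul_abs h h2ne with h' | h' <;> rw [h'] at h0 <;> norm_num at h0
    · exact hPne h0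
  have hE2ae : ∀ᵐ t ∂volume, t ∉ E2 := by
    filter_upwards [ae_accumulation E2 hE2meas, hphi2d, hmax'] with t hacc hd hm htE2
    obtain ⟨htIoo, h20, h1ne⟩ := (hE2mem t).1 htE2
    have hder := hd htIoo
    have hzero : ∀ s ∈ E2, phi2 s = 0 := fun s hs => ((hE2mem s).1 hs).2.1
    have hd0 : (u t).1 * Phi12 t = 0 :=
      deriv_zero_of_acc hzero h20 (hacc htE2) hder
    have h := hm htIoo
    rw [h20] at h
    simp only [mul_zero, add_zero, abs_zero] at h
    have hPne := hPhine t (Ioo_subset_Icc_self htIoo)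
    rw [mul_eq_zero] at hd0
    rcases hd0 with h0 | h0
    · rcases abs_one_of_mul_abs h h1ne with h' | h' <;> rw [h'] at h0 <;> norm_num at h0
    · exact hPne h0
  have hEDae : ∀ᵐ t ∂volume, t ∈ ED → (HasDerivAt phi1 0 t ∧ HasDerivAt phi2 0 t) := by
    filter_upwards [ae_accumulation ED hEDmeas, hphi1d, hphi2d] with t hacc h1 h2 htED
    obtain ⟨htIoo, h10, h20⟩ := (hEDmem t).1 htED
    have hacc' := hacc htED
    have hder1 := h1 htIoo
    have hder2 := h2 htIoo
    have hz1 : ∀ s ∈ ED, phi1 s = 0 := fun s hs => ((hEDmem s).1 hs).2.1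
    have hz2 : ∀ s ∈ ED, phi2 s = 0 := fun s hs => ((hEDmem s).1 hs).2.2
    have d1 := deriv_zero_of_acc hz1 h10 hacc' hder1
    have d2 := deriv_zero_of_acc hz2 h20 hacc' hder2
    rw [d1] at hder1
    rw [d2] at hder2
    exact ⟨hder1, hder2⟩
  -- the function |phi1| + |phi2| is constant
  have hhd : ∀ᵐ t ∂volume, t ∈ Ioo (0:ℝ) T' →
      HasDerivAt (fun r => |phi1 r| + |phi2 r|) 0 t := by
    filter_upwards [hphi1d, hphi2d, hmax', hE1ae, hE2ae, hEDae] with t h1 h2 hm hne1 hne2 hD ht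
    by_cases c1 : phi1 t = 0 <;> by_cases c2 : phi2 t = 0
    · obtain ⟨d1, d2⟩ := hD ((hEDmem t).2 ⟨ht, c1, c2⟩)
      have := (abs_hasDerivAt_zero d1 c1).add (abs_hasDerivAt_zero d2 c2)
      exact this.congr_deriv (by simp)
    · exact absurd ((hE1mem t).2 ⟨ht, c1, c2⟩) hne1
    · exact absurd ((hE2mem t).2 ⟨ht, c2, c1⟩) hne2
    · obtain ⟨hs1, hs2⟩ := control_sign (hubdd t (Ioo_subset_Icc_self ht)).1
        (hubdd t (Ioo_subset_Icc_self ht)).2 (hm ht)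
      have hc1 := abs_one_of_mul_abs hs1 c1
      have hc2 := abs_one_of_mul_abs hs2 c2
      have hp1 : 0 < (u t).1 * phi1 t := by rw [hs1]; exact abs_pos.2 c1
      have hp2 : 0 < (u t).2 * phi2 t := by rw [hs2]; exact abs_pos.2 c2
      have hev1 := abs_eventually_eq hc1 hphi1cont hp1
      have hev2 := abs_eventually_eq hc2 hphi2cont hp2
      have hev : (fun r => |phi1 r| + |phi2 r|)
          =ᶠ[𝓝 t] fun r => (u t).1 * phi1 r + (u t).2 * phi2 r := hev1.add hev2
      have hder : HasDerivAt (fun r => (u t).1 * phi1 r + (u t).2 * phi2 r)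
          ((u t).1 * -((u t).2 * Phi12 t) + (u t).2 * ((u t).1 * Phi12 t)) t :=
        ((h1 ht).const_mul _).add ((h2 ht).const_mul _)
      have hval : (u t).1 * -((u t).2 * Phi12 t) + (u t).2 * ((u t).1 * Phi12 t) = 0 := by ring
      rw [hval] at hder
      exact hder.congr_of_eventuallyEq hev
  have hconst : ∀ t ∈ Icc (0:ℝ) T', |phi1 t| + |phi2 t| = |phi1 0| + |phi2 0| := by
    intro t ht
    have hlip : LipschitzWith (C1 + C2).toNNReal (fun r => |phi1 r| + |phi2 r|) := by
      apply real_lip (by linarith)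
      intro s r
      have e1 := hphi1lipd s r
      have e2 := hphi2lipd s r
      have a1 : |(|phi1 r|) - (|phi1 s|)| ≤ |phi1 r - phi1 s| := abs_abs_sub_abs_le_abs_sub _ _
      have a2 : |(|phi2 r|) - (|phi2 s|)| ≤ |phi2 r - phi2 s| := abs_abs_sub_abs_le_abs_sub _ _
      have key : (|phi1 r| + |phi2 r|) - (|phi1 s| + |phi2 s|)
          = ((|phi1 r|) - (|phi1 s|)) + ((|phi2 r|) - (|phi2 s|)) := by ring
      rw [key]
      calc |((|phi1 r|) - (|phi1 s|)) + ((|phi2 r|) - (|phi2 s|))|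
          ≤ |(|phi1 r|) - (|phi1 s|)| + |(|phi2 r|) - (|phi2 s|)| := abs_add_le _ _
        _ ≤ C1 * |r - s| + C2 * |r - s| := by linarith
        _ = (C1 + C2) * |r - s| := by ring
    apply const_of_lipschitz_ae_deriv_zero hlip ht.1
    filter_upwards [hhd] with s hs hmem
    exact hs (Set.mem_Ioo.2 ⟨hmem.1, lt_of_lt_of_le hmem.2 ht.2⟩)
  have hc00 : 0 ≤ |phi1 0| + |phi2 0| := by positivity
  rcases hc00.eq_or_lt with hzero | hpos
  · -- degenerate case: both switching functions vanish identically; contradicts optimality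
    exfalso
    have hz1 : ∀ t ∈ Icc (0:ℝ) T', phi1 t = 0 := by
      intro t ht
      have h := hconst t ht
      rw [← hzero] at h
      have := abs_nonneg (phi1 t)
      have := abs_nonneg (phi2 t)
      have h1 : |phi1 t| = 0 := by linarith
      exact abs_eq_zero.1 h1
    have hz2 : ∀ t ∈ Icc (0:ℝ) T', phi2 t = 0 := by
      intro t ht
      have h := hconst t ht
      rw [← hzero] at h
      have := abs_nonneg (phi1 t)
      have := abs_nonneg (phi2 t)
      have h1 : |phi2 t| = 0 := by linarith
      exact abs_eq_zero.1 h1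
    have hu0 : ∀ᵐ t ∂volume, t ∈ Ioo (0:ℝ) T' → vel t = 0 := by
      filter_upwards [hphi1d, hphi2d] with t h1 h2 ht
      have hnb : Ioo (0:ℝ) T' ∈ 𝓝 t := isOpen_Ioo.mem_nhds ht
      have hev1 : phi1 =ᶠ[𝓝 t] (fun _ => (0:ℝ)) := by
        filter_upwards [hnb] with r hr; exact hz1 r (Ioo_subset_Icc_self hr)
      have hev2 : phi2 =ᶠ[𝓝 t] (fun _ => (0:ℝ)) := by
        filter_upwards [hnb] with r hr; exact hz2 r (Ioo_subset_Icc_self hr)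
      have e1 : HasDerivAt phi1 0 t := (hasDerivAt_const t (0:ℝ)).congr_of_eventuallyEq hev1
      have e2 : HasDerivAt phi2 0 t := (hasDerivAt_const t (0:ℝ)).congr_of_eventuallyEq hev2
      have u2z := (h1 ht).unique e1
      have u1z := (h2 ht).unique e2
      have hPne := hPhine t (Ioo_subset_Icc_self ht)
      rw [neg_eq_zero, mul_eq_zero] at u2z
      rw [mul_eq_zero] at u1z
      have hu2 : (u t).2 = 0 := u2z.resolve_right hPne
      have hu1 : (u t).1 = 0 := u1z.resolve_right hPne
      rw [hvel]
      simp only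
      rw [hu1, hu2]
      simp
    have hqT : q T' = q 0 := by
      have hrep := hqrep T' (Set.mem_Icc.2 ⟨hT'0, le_refl T'⟩)
      have hz : (∫ s in Icc (0:ℝ) T', vel s) = 0 := by
        apply integral_eq_zero_of_ae
        have h0 : ∀ᵐ s ∂(volume.restrict (Icc (0:ℝ) T')), s ≠ (0:ℝ) :=
          ae_restrict_of_ae (by
            simpa using (measure_eq_zero_iff_ae_notMem (μ := volume)).1
              (Real.volume_singleton (a := (0:ℝ))))
        have hT : ∀ᵐ s ∂(volume.restrict (Icc (0:ℝ) T')), s ≠ T' :=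
          ae_restrict_of_ae (by
            simpa using (measure_eq_zero_iff_ae_notMem (μ := volume)).1
              (Real.volume_singleton (a := T')))
        filter_upwards [h0, hT, ae_restrict_mem measurableSet_Icc,
          ae_restrict_of_ae hu0] with s hs0 hsT hsI hvel0
        exact hvel0 (Set.mem_Ioo.2 ⟨lt_of_le_of_ne hsI.1 (Ne.symm hs0),
          lt_of_le_of_ne hsI.2 hsT⟩)
      rw [hrep, hz, add_zero]
    apply hopt
    refine ⟨0, fun _ => q 0, fun _ => ((0:ℝ), (0:ℝ)), hT'pos, ?_, rfl, ?_⟩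
    · refine ⟨le_refl 0, measurable_const, fun t _ => by norm_num, ?_, ?_⟩
      · have heq0 : (fun s : ℝ => (((0:ℝ),(0:ℝ)) : ℝ × ℝ).1 • X₁ ((fun _ : ℝ => q 0) s)
            + (((0:ℝ),(0:ℝ)) : ℝ × ℝ).2 • X₂ ((fun _ : ℝ => q 0) s)) = fun _ : ℝ => (0:E3) := by
          funext s; simp
        rw [heq0]
        exact integrableOn_zero
      · intro t ht
        have ht0 : t = 0 := le_antisymm ht.2 ht.1
        subst ht0
        simp
    · show q 0 = q T'
      rw [hqT]
  · -- main case: no common zeros, zeros are isolated, finitely many bang arcs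
    have hnc : ∀ t ∈ Icc (0:ℝ) T', ¬(phi1 t = 0 ∧ phi2 t = 0) := by
      rintro t ht ⟨h1, h2⟩
      have h := hconst t ht
      rw [h1, h2] at h
      simp at h
      linarith
    obtain ⟨σ, hσpm, hσpos⟩ : ∃ σ : ℝ, (σ = 1 ∨ σ = -1) ∧
        ∀ r ∈ Icc (0:ℝ) T', 0 < σ * Phi12 r := by
      have hivt : ∀ r ∈ Icc (0:ℝ) T', ∀ r' ∈ Icc (0:ℝ) T',
          Phi12 r < 0 → 0 < Phi12 r' → False := by
        intro r hr r' hr' hneg hposr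
        have hsub : Set.uIcc r r' ⊆ Icc (0:ℝ) T' := by
          obtain ⟨hr1, hr2⟩ := Set.mem_Icc.1 hr
          obtain ⟨hr1', hr2'⟩ := Set.mem_Icc.1 hr'
          intro z hz
          rw [Set.mem_uIcc] at hz
          rcases hz with ⟨hz1, hz2⟩ | ⟨hz1, hz2⟩ <;>
            exact Set.mem_Icc.2 ⟨by linarith, by linarith⟩
        have h0mem : (0:ℝ) ∈ Set.uIcc (Phi12 r) (Phi12 r') :=
          Set.mem_uIcc.2 (Or.inl ⟨hneg.le, hposr.le⟩)
        obtain ⟨z, hz, hz0⟩ := intermediate_value_uIcc (hPhicont.continuousOn.mono hsub) h0mem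
        exact hPhine z (hsub hz) hz0
      rcases (hPhine 0 h0Icc).lt_or_gt with hneg | hposs
      · refine ⟨-1, Or.inr rfl, fun r hr => ?_⟩
        rcases (hPhine r hr).lt_or_gt with h' | h'
        · nlinarith
        · exact (hivt 0 h0Icc r hr hneg h').elim
      · refine ⟨1, Or.inl rfl, fun r hr => ?_⟩
        rcases (hPhine r hr).lt_or_gt with h' | h'
        · exact (hivt r hr 0 h0Icc h' hposs).elim
        · nlinarith
    obtain ⟨r₀, hr₀Icc, hr₀min⟩ := isCompact_Icc.exists_isMinOn (Set.nonempty_Icc.2 hT'0) (f := fun r => σ * Phi12 r)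
      ((continuous_const.mul hPhicont).continuousOn)
    have hm0 : 0 < σ * Phi12 r₀ := hσpos r₀ hr₀Icc
    have hIntne : ∀ s t : ℝ, s ∈ Icc (0:ℝ) T' → t ∈ Icc (0:ℝ) T' → s < t →
        (∫ y in Set.Ioc s t, Phi12 y) ≠ 0 := by
      intro s t hs ht hst h0
      have h1 : (∫ y in Set.Ioc s t, σ * Phi12 y) = σ * ∫ y in Set.Ioc s t, Phi12 y :=
        integral_const_mul σ _
      have h2 : (∫ _y in Set.Ioc s t, (σ * Phi12 r₀)) ≤ ∫ y in Set.Ioc s t, σ * Phi12 y := by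
        apply setIntegral_mono_on (integrableOn_const measure_Ioc_lt_top.ne)
          ((continuous_const.mul hPhicont).integrableOn_Ioc) measurableSet_Ioc
        intro y hy
        exact hr₀min (Set.mem_Icc.2 ⟨le_trans hs.1 hy.1.le, le_trans hy.2 ht.2⟩)
      rw [setIntegral_const, h0, mul_zero] at *
      rw [h1] at h2
      rw [Real.volume_real_Ioc_of_le hst.le, smul_eq_mul] at h2
      nlinarith
    -- integrability of the indicator integrands
    have hGbd : ∀ (w : ℝ → ℝ), (∀ r ∈ Icc (0:ℝ) T', |w r| ≤ 1) →
        ∀ r, ‖Set.indicator (Icc (0:ℝ) T') (fun r => w r * Phi12 r) r‖ ≤ MP := by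
      intro w hw r
      by_cases hr : r ∈ Icc (0:ℝ) T'
      · rw [Set.indicator_of_mem hr, Real.norm_eq_abs, abs_mul]
        calc |w r| * |Phi12 r| ≤ 1 * MP :=
            mul_le_mul (hw r hr) (hMP r hr) (abs_nonneg _) one_pos.le
          _ = MP := one_mul _
      · rw [Set.indicator_of_notMem hr]; simpa using hMP0
    have hGint : ∀ (w : ℝ → ℝ),
        Measurable (Set.indicator (Icc (0:ℝ) T') (fun r => w r * Phi12 r)) →
        (∀ r, ‖Set.indicator (Icc (0:ℝ) T') (fun r => w r * Phi12 r) r‖ ≤ MP) →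
        Integrable (Set.indicator (Icc (0:ℝ) T') (fun r => w r * Phi12 r)) volume := by
      intro w hmeas hbd
      apply Integrable.mono' (g := Set.indicator (Icc (0:ℝ) T') (fun _ => MP))
        ((integrable_indicator_iff measurableSet_Icc).2
          (integrableOn_const measure_Icc_lt_top.ne))
        hmeas.aestronglyMeasurable
      apply Eventually.of_forall
      intro r
      by_cases hr : r ∈ Icc (0:ℝ) T'
      · have h := hbd r
        rw [Set.indicator_of_mem hr] at h
        simp only [Set.indicator_of_mem hr]
        exact h
      · rw [Set.indicator_of_notMem hr, Set.indicator_of_notMem hr]; simp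
    have hG2meas : Measurable (Set.indicator (Icc (0:ℝ) T') (fun r => (u r).2 * Phi12 r)) :=
      ((measurable_snd.comp humeas).mul hPhicont.measurable).indicator measurableSet_Icc
    have hG1meas : Measurable (Set.indicator (Icc (0:ℝ) T') (fun r => (u r).1 * Phi12 r)) :=
      ((measurable_fst.comp humeas).mul hPhicont.measurable).indicator measurableSet_Icc
    -- injectivity of phi1 across its zeros, where phi2 has constant sign
    have hinj1 : ∀ ε : ℝ, (ε = 1 ∨ ε = -1) → ∀ s t : ℝ, s ∈ Icc (0:ℝ) T' →
        t ∈ Icc (0:ℝ) T' → s < t → (∀ r ∈ Set.Ioc s t, 0 < ε * phi2 r) →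
        phi1 t ≠ phi1 s := by
      intro ε hε s t hs ht hst hsign heq
      set G : ℝ → ℝ := Set.indicator (Icc (0:ℝ) T') (fun r => (u r).2 * Phi12 r) with hGdef
      have hGb : ∀ r, ‖G r‖ ≤ MP := hGbd _ (fun r hr => (hubdd r hr).2)
      have hGi : Integrable G volume := hGint _ hG2meas hGb
      have hgd : ∀ᵐ r ∂volume, r ∈ Set.Ioo s t →
          HasDerivAt (fun x => phi1 x + ∫ y in (0:ℝ)..x, G y) 0 r := by
        filter_upwards [hphi1d, ae_hasDerivAt_primitive hGi] with r h1 h2 hr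
        have hrI : r ∈ Ioo (0:ℝ) T' := ⟨lt_of_le_of_lt hs.1 hr.1, lt_of_lt_of_le hr.2 ht.2⟩
        have hGr : G r = (u r).2 * Phi12 r :=
          Set.indicator_of_mem (Ioo_subset_Icc_self hrI) _
        have hsum := (h1 hrI).add h2
        rw [hGr] at hsum
        exact hsum.congr_deriv (by simp)
      have hliptot : LipschitzWith (C1 + MP).toNNReal
          (fun x => phi1 x + ∫ y in (0:ℝ)..x, G y) := by
        apply real_lip (by linarith)
        intro a b
        have e1 := hphi1lipd a b
        have e2 : |(∫ y in (0:ℝ)..b, G y) - ∫ y in (0:ℝ)..a, G y| ≤ MP * |b - a| := by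
          have h := (lipschitz_primitive hGi hGb).dist_le_mul b a
          rw [dist_eq_norm, Real.dist_eq, Real.coe_toNNReal _ hMP0, Real.norm_eq_abs] at h
          exact h
        have key : (phi1 b + ∫ y in (0:ℝ)..b, G y) - (phi1 a + ∫ y in (0:ℝ)..a, G y)
            = (phi1 b - phi1 a) + ((∫ y in (0:ℝ)..b, G y) - ∫ y in (0:ℝ)..a, G y) := by ring
        rw [key]
        calc |(phi1 b - phi1 a) + ((∫ y in (0:ℝ)..b, G y) - ∫ y in (0:ℝ)..a, G y)|
            ≤ |phi1 b - phi1 a| + |(∫ y in (0:ℝ)..b, G y) - ∫ y in (0:ℝ)..a, G y| :=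
              abs_add_le _ _
          _ ≤ C1 * |b - a| + MP * |b - a| := by linarith
          _ = (C1 + MP) * |b - a| := by ring
      have hgconst := const_of_lipschitz_ae_deriv_zero hliptot hst.le hgd
      have hPeq : (∫ y in (0:ℝ)..t, G y) - (∫ y in (0:ℝ)..s, G y) = ∫ y in s..t, G y :=
        intervalIntegral.integral_interval_sub_left hGi.intervalIntegrable
          hGi.intervalIntegrable
      have hzero : (∫ y in s..t, G y) = 0 := by
        rw [← hPeq]
        have hg2 : phi1 t + (∫ y in (0:ℝ)..t, G y) = phi1 s + ∫ y in (0:ℝ)..s, G y := hgconst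
        linarith
      have hae : ∀ᵐ r ∂volume, r ∈ Set.Ioc s t → G r = ε * Phi12 r := by
        have hTae : ∀ᵐ r ∂volume, r ≠ T' := by
          simpa using (measure_eq_zero_iff_ae_notMem (μ := volume)).1
            (Real.volume_singleton (a := T'))
        filter_upwards [hmax', hTae] with r hm hrT hr
        have hrIcc : r ∈ Icc (0:ℝ) T' :=
          Set.mem_Icc.2 ⟨le_trans hs.1 hr.1.le, le_trans hr.2 ht.2⟩
        have hrIoo : r ∈ Ioo (0:ℝ) T' := Set.mem_Ioo.2 ⟨lt_of_le_of_lt hs.1 hr.1,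
          lt_of_le_of_ne (le_trans hr.2 ht.2) hrT⟩
        obtain ⟨-, h2⟩ := control_sign (hubdd r hrIcc).1 (hubdd r hrIcc).2 (hm hrIoo)
        have hu2 : (u r).2 = ε := eq_sign_of_mul_abs h2 hε (hsign r hr)
        rw [hGdef, Set.indicator_of_mem hrIcc]
        rw [hu2]
      have hI : (∫ y in s..t, G y) = ε * ∫ y in Set.Ioc s t, Phi12 y := by
        rw [intervalIntegral.integral_of_le hst.le,
          setIntegral_congr_ae measurableSet_Ioc hae]
        exact integral_const_mul ε _
      rw [hI] at hzero
      rcases mul_eq_zero.1 hzero with h' | h'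
      · rcases hε with rfl | rfl <;> norm_num at h'
      · exact hIntne s t hs ht hst h'
    -- injectivity of phi2 across its zeros, where phi1 has constant sign
    have hinj2 : ∀ ε : ℝ, (ε = 1 ∨ ε = -1) → ∀ s t : ℝ, s ∈ Icc (0:ℝ) T' →
        t ∈ Icc (0:ℝ) T' → s < t → (∀ r ∈ Set.Ioc s t, 0 < ε * phi1 r) →
        phi2 t ≠ phi2 s := by
      intro ε hε s t hs ht hst hsign heq
      set G : ℝ → ℝ := Set.indicator (Icc (0:ℝ) T') (fun r => (u r).1 * Phi12 r) with hGdef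
      have hGb : ∀ r, ‖G r‖ ≤ MP := hGbd _ (fun r hr => (hubdd r hr).1)
      have hGi : Integrable G volume := hGint _ hG1meas hGb
      have hgd : ∀ᵐ r ∂volume, r ∈ Set.Ioo s t →
          HasDerivAt (fun x => phi2 x - ∫ y in (0:ℝ)..x, G y) 0 r := by
        filter_upwards [hphi2d, ae_hasDerivAt_primitive hGi] with r h1 h2 hr
        have hrI : r ∈ Ioo (0:ℝ) T' := ⟨lt_of_le_of_lt hs.1 hr.1, lt_of_lt_of_le hr.2 ht.2⟩
        have hGr : G r = (u r).1 * Phi12 r :=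
          Set.indicator_of_mem (Ioo_subset_Icc_self hrI) _
        have hsum := (h1 hrI).sub h2
        rw [hGr] at hsum
        exact hsum.congr_deriv (by simp)
      have hliptot : LipschitzWith (C2 + MP).toNNReal
          (fun x => phi2 x - ∫ y in (0:ℝ)..x, G y) := by
        apply real_lip (by linarith)
        intro a b
        have e1 := hphi2lipd a b
        have e2 : |(∫ y in (0:ℝ)..b, G y) - ∫ y in (0:ℝ)..a, G y| ≤ MP * |b - a| := by
          have h := (lipschitz_primitive hGi hGb).dist_le_mul b a
          rw [dist_eq_norm, Real.dist_eq, Real.coe_toNNReal _ hMP0, Real.norm_eq_abs] at h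
          exact h
        have key : (phi2 b - ∫ y in (0:ℝ)..b, G y) - (phi2 a - ∫ y in (0:ℝ)..a, G y)
            = (phi2 b - phi2 a) - ((∫ y in (0:ℝ)..b, G y) - ∫ y in (0:ℝ)..a, G y) := by ring
        rw [key]
        calc |(phi2 b - phi2 a) - ((∫ y in (0:ℝ)..b, G y) - ∫ y in (0:ℝ)..a, G y)|
            ≤ |phi2 b - phi2 a| + |(∫ y in (0:ℝ)..b, G y) - ∫ y in (0:ℝ)..a, G y| :=
              abs_sub _ _
          _ ≤ C2 * |b - a| + MP * |b - a| := by linarith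
          _ = (C2 + MP) * |b - a| := by ring
      have hgconst := const_of_lipschitz_ae_deriv_zero hliptot hst.le hgd
      have hPeq : (∫ y in (0:ℝ)..t, G y) - (∫ y in (0:ℝ)..s, G y) = ∫ y in s..t, G y :=
        intervalIntegral.integral_interval_sub_left hGi.intervalIntegrable
          hGi.intervalIntegrable
      have hzero : (∫ y in s..t, G y) = 0 := by
        rw [← hPeq]
        have hg2 : phi2 t - (∫ y in (0:ℝ)..t, G y) = phi2 s - ∫ y in (0:ℝ)..s, G y := hgconst
        linarith
      have hae : ∀ᵐ r ∂volume, r ∈ Set.Ioc s t → G r = ε * Phi12 r := by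
        have hTae : ∀ᵐ r ∂volume, r ≠ T' := by
          simpa using (measure_eq_zero_iff_ae_notMem (μ := volume)).1
            (Real.volume_singleton (a := T'))
        filter_upwards [hmax', hTae] with r hm hrT hr
        have hrIcc : r ∈ Icc (0:ℝ) T' :=
          Set.mem_Icc.2 ⟨le_trans hs.1 hr.1.le, le_trans hr.2 ht.2⟩
        have hrIoo : r ∈ Ioo (0:ℝ) T' := Set.mem_Ioo.2 ⟨lt_of_le_of_lt hs.1 hr.1,
          lt_of_le_of_ne (le_trans hr.2 ht.2) hrT⟩
        obtain ⟨h1, -⟩ := control_sign (hubdd r hrIcc).1 (hubdd r hrIcc).2 (hm hrIoo)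
        have hu1 : (u r).1 = ε := eq_sign_of_mul_abs h1 hε (hsign r hr)
        rw [hGdef, Set.indicator_of_mem hrIcc]
        rw [hu1]
      have hI : (∫ y in s..t, G y) = ε * ∫ y in Set.Ioc s t, Phi12 y := by
        rw [intervalIntegral.integral_of_le hst.le,
          setIntegral_congr_ae measurableSet_Ioc hae]
        exact integral_const_mul ε _
      rw [hI] at hzero
      rcases mul_eq_zero.1 hzero with h' | h'
      · rcases hε with rfl | rfl <;> norm_num at h'
      · exact hIntne s t hs ht hst h'
    -- the zero set is finite
    set Z : Set ℝ := {r | r ∈ Icc (0:ℝ) T' ∧ (phi1 r = 0 ∨ phi2 r = 0)} with hZdef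
    have hiso : ∀ t₀ ∈ Z, ∃ ρ > 0, ∀ z ∈ Z, |z - t₀| < ρ → z = t₀ := by
      intro t₀ ht₀
      obtain ⟨ht₀Icc, ht₀or⟩ := ht₀
      rcases ht₀or with h10 | h20
      · have h2ne : phi2 t₀ ≠ 0 := fun h => hnc t₀ ht₀Icc ⟨h10, h⟩
        set ε : ℝ := if 0 < phi2 t₀ then 1 else -1 with hεdef
        have hεpm : ε = 1 ∨ ε = -1 := by rw [hεdef]; split <;> simp
        have hεpos : 0 < ε * phi2 t₀ := by
          rw [hεdef]; split
          · simpa using ‹0 < phi2 t₀›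
          · have hlt : phi2 t₀ < 0 := lt_of_le_of_ne (not_lt.1 ‹¬0 < phi2 t₀›) h2ne
            nlinarith
        have hopen : IsOpen {y | 0 < ε * phi2 y} :=
          isOpen_lt continuous_const (continuous_const.mul hphi2cont)
        rcases Metric.isOpen_iff.1 hopen t₀ hεpos with ⟨ρ, hρ, hball⟩
        refine ⟨ρ, hρ, ?_⟩
        intro z hz hzρ
        by_contra hne
        obtain ⟨hzIcc, hzor⟩ := hz
        have hz2pos : 0 < ε * phi2 z :=
          hball (by rw [Metric.mem_ball, Real.dist_eq]; exact hzρ)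
        have hz2ne : phi2 z ≠ 0 := by
          intro h; rw [h, mul_zero] at hz2pos; exact lt_irrefl 0 hz2pos
        have hz1 : phi1 z = 0 := hzor.resolve_right hz2ne
        rcases lt_or_gt_of_ne hne with hlt | hgt
        · refine hinj1 ε hεpm z t₀ hzIcc ht₀Icc hlt ?_ (by rw [h10, hz1])
          intro r hr
          apply hball
          rw [Metric.mem_ball, Real.dist_eq]
          have hh1 : t₀ - z = |z - t₀| := by
            rw [abs_sub_comm, abs_of_nonneg (by linarith)]
          have hh2 : |r - t₀| ≤ t₀ - z := by
            rw [abs_le]; exact ⟨by linarith [hr.1], by linarith [hr.2]⟩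
          linarith
        · refine hinj1 ε hεpm t₀ z ht₀Icc hzIcc hgt ?_ (by rw [hz1, h10])
          intro r hr
          apply hball
          rw [Metric.mem_ball, Real.dist_eq]
          have hh1 : z - t₀ = |z - t₀| := by
            rw [abs_of_nonneg (by linarith)]
          have hh2 : |r - t₀| ≤ z - t₀ := by
            rw [abs_le]; exact ⟨by linarith [hr.1], by linarith [hr.2]⟩
          linarith
      · have h1ne : phi1 t₀ ≠ 0 := fun h => hnc t₀ ht₀Icc ⟨h, h20⟩
        set ε : ℝ := if 0 < phi1 t₀ then 1 else -1 with hεdef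
        have hεpm : ε = 1 ∨ ε = -1 := by rw [hεdef]; split <;> simp
        have hεpos : 0 < ε * phi1 t₀ := by
          rw [hεdef]; split
          · simpa using ‹0 < phi1 t₀›
          · have hlt : phi1 t₀ < 0 := lt_of_le_of_ne (not_lt.1 ‹¬0 < phi1 t₀›) h1ne
            nlinarith
        have hopen : IsOpen {y | 0 < ε * phi1 y} :=
          isOpen_lt continuous_const (continuous_const.mul hphi1cont)
        rcases Metric.isOpen_iff.1 hopen t₀ hεpos with ⟨ρ, hρ, hball⟩
        refine ⟨ρ, hρ, ?_⟩
        intro z hz hzρ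
        by_contra hne
        obtain ⟨hzIcc, hzor⟩ := hz
        have hz1pos : 0 < ε * phi1 z :=
          hball (by rw [Metric.mem_ball, Real.dist_eq]; exact hzρ)
        have hz1ne : phi1 z ≠ 0 := by
          intro h; rw [h, mul_zero] at hz1pos; exact lt_irrefl 0 hz1pos
        have hz2 : phi2 z = 0 := hzor.resolve_left hz1ne
        rcases lt_or_gt_of_ne hne with hlt | hgt
        · refine hinj2 ε hεpm z t₀ hzIcc ht₀Icc hlt ?_ (by rw [h20, hz2])
          intro r hr
          apply hball
          rw [Metric.mem_ball, Real.dist_eq]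
          have hh1 : t₀ - z = |z - t₀| := by
            rw [abs_sub_comm, abs_of_nonneg (by linarith)]
          have hh2 : |r - t₀| ≤ t₀ - z := by
            rw [abs_le]; exact ⟨by linarith [hr.1], by linarith [hr.2]⟩
          linarith
        · refine hinj2 ε hεpm t₀ z ht₀Icc hzIcc hgt ?_ (by rw [hz2, h20])
          intro r hr
          apply hball
          rw [Metric.mem_ball, Real.dist_eq]
          have hh1 : z - t₀ = |z - t₀| := by
            rw [abs_of_nonneg (by linarith)]
          have hh2 : |r - t₀| ≤ z - t₀ := by
            rw [abs_le]; exact ⟨by linarith [hr.1], by linarith [hr.2]⟩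
          linarith
    have hZclosed : IsClosed Z := by
      have hZeq : Z = Icc (0:ℝ) T' ∩ (phi1 ⁻¹' {0} ∪ phi2 ⁻¹' {0}) := by
        ext r
        rw [hZdef]
        simp [Set.mem_setOf_eq, Set.mem_inter_iff, Set.mem_union]
      rw [hZeq]
      exact isClosed_Icc.inter ((isClosed_singleton.preimage hphi1cont).union
        (isClosed_singleton.preimage hphi2cont))
    have hZcomp : IsCompact Z := isCompact_Icc.of_isClosed_subset hZclosed (fun r hr => hr.1)
    have hZdisc : DiscreteTopology Z := by
      rw [discreteTopology_subtype_iff]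
      intro x hx
      obtain ⟨ρ, hρ, hiso'⟩ := hiso x hx
      rw [inf_principal_eq_bot]
      have hsub : Metric.ball x ρ ∩ {x}ᶜ ⊆ Zᶜ := by
        intro y hy hyZ
        exact hy.2 (hiso' y hyZ (by rw [← Real.dist_eq]; exact Metric.mem_ball.1 hy.1))
      exact mem_nhdsWithin.2 ⟨Metric.ball x ρ, Metric.isOpen_ball, Metric.mem_ball_self hρ, hsub⟩
    have hZfin : Z.Finite := hZcomp.finite (isDiscrete_iff_discreteTopology.2 hZdisc)
    -- enumerate the zeros together with the endpoints
    set Zfin : Finset ℝ := hZfin.toFinset ∪ {0, T'} with hZfindef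
    have hmemZfin : ∀ r : ℝ, r ∈ Zfin ↔ r ∈ Z ∨ r = 0 ∨ r = T' := by
      intro r
      rw [hZfindef]
      simp [Set.Finite.mem_toFinset]
      tauto
    have hZfinIcc : ∀ r ∈ Zfin, r ∈ Icc (0:ℝ) T' := by
      intro r hr
      rcases (hmemZfin r).1 hr with h | h | h
      · exact h.1
      · rw [h]; exact h0Icc
      · rw [h]; exact Set.mem_Icc.2 ⟨hT'0, le_refl _⟩
    have h0mem : (0:ℝ) ∈ Zfin := (hmemZfin 0).2 (Or.inr (Or.inl rfl))
    have hTmem : T' ∈ Zfin := (hmemZfin T').2 (Or.inr (Or.inr rfl))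
    have hcard : 1 < Zfin.card :=
      Finset.one_lt_card.2 ⟨0, h0mem, T', hTmem, ne_of_lt hT'pos⟩
    obtain ⟨n, hn⟩ : ∃ n : ℕ, Zfin.card = n + 1 := ⟨Zfin.card - 1, by omega⟩
    have hn1 : 1 ≤ n := by omega
    set e := Zfin.orderIsoOfFin hn with hedef
    have hemem : ∀ i, ((e i : Zfin) : ℝ) ∈ Zfin := fun i => (e i).2
    have hstrict : StrictMono fun i => ((e i : Zfin) : ℝ) :=
      fun i j hij => Subtype.coe_lt_coe.2 (e.strictMono hij)
    have heLast : ((e (Fin.last n) : Zfin) : ℝ) = T' := by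
      obtain ⟨j, hj⟩ := e.surjective ⟨T', hTmem⟩
      have hjT : ((e j : Zfin) : ℝ) = T' := by rw [hj]
      have h1 : ((e j : Zfin) : ℝ) ≤ ((e (Fin.last n) : Zfin) : ℝ) := by
        rcases eq_or_lt_of_le (Fin.le_last j) with h | h
        · rw [h]
        · exact (hstrict h).le
      rw [hjT] at h1
      exact le_antisymm (hZfinIcc _ (hemem _)).2 h1
    have hZmem' : ∀ r, r ∈ Icc (0:ℝ) T' → (phi1 r = 0 ∨ phi2 r = 0) → r ∈ Zfin := by
      intro r h1 h2
      exact (hmemZfin r).2 (Or.inl ⟨h1, h2⟩)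
    have hinterior : ∀ (i : Fin n), ∀ r ∈ Set.Ioo (((e i.castSucc : Zfin)) : ℝ)
        (((e i.succ : Zfin)) : ℝ), phi1 r ≠ 0 ∧ phi2 r ≠ 0 := by
      intro i r hr
      have haI := hZfinIcc _ (hemem i.castSucc)
      have hbI := hZfinIcc _ (hemem i.succ)
      have hrIcc : r ∈ Icc (0:ℝ) T' :=
        Set.mem_Icc.2 ⟨le_trans haI.1 hr.1.le, le_trans hr.2.le hbI.2⟩
      have key : r ∈ Zfin → False := by
        intro hrZ
        obtain ⟨j, hj⟩ := e.surjective ⟨r, hrZ⟩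
        have hjr : ((e j : Zfin) : ℝ) = r := by rw [hj]
        have h1 : i.castSucc < j := by
          by_contra hcon
          push_neg at hcon
          have hle : ((e j : Zfin) : ℝ) ≤ ((e i.castSucc : Zfin) : ℝ) := by
            rcases eq_or_lt_of_le hcon with h | h
            · rw [h]
            · exact (hstrict h).le
          rw [hjr] at hle
          exact absurd hr.1 (not_lt.2 hle)
        have h2 : j < i.succ := by
          by_contra hcon
          push_neg at hcon
          have hle : ((e i.succ : Zfin) : ℝ) ≤ ((e j : Zfin) : ℝ) := by
            rcases eq_or_lt_of_le hcon with h | h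
            · rw [← h]
            · exact (hstrict h).le
          rw [hjr] at hle
          exact absurd hr.2 (not_lt.2 hle)
        rw [Fin.lt_iff_val_lt_val] at h1 h2
        simp only [Fin.coe_castSucc, Fin.val_succ] at h1 h2
        omega
      exact ⟨fun h => key (hZmem' r hrIcc (Or.inl h)),
        fun h => key (hZmem' r hrIcc (Or.inr h))⟩
    refine ⟨n, fun i => ((e i.castSucc : Zfin) : ℝ), fun i => ((e i.succ : Zfin) : ℝ), ?_, ?_⟩
    · intro i
      have haI := hZfinIcc _ (hemem i.castSucc)
      have hbI := hZfinIcc _ (hemem i.succ)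
      have hab : ((e i.castSucc : Zfin) : ℝ) < ((e i.succ : Zfin) : ℝ) :=
        hstrict (Fin.castSucc_lt_succ (i := i))
      refine ⟨haI.1, hab, hbI.2, ?_, ?_⟩
      · intro r hr
        have hrIcc : r ∈ Icc (0:ℝ) T' :=
          Set.mem_Icc.2 ⟨le_trans haI.1 hr.1.le, le_trans hr.2.le hbI.2⟩
        have hint := hinterior i r hr
        rw [hphiF1 r hrIcc, hphiF2 r hrIcc]
        exact hint
      · intro a' b' ha'0 ha' hb' hb'T hnon
        constructor
        · by_contra hne
          have ha'lt : a' < ((e i.castSucc : Zfin) : ℝ) := lt_of_le_of_ne ha' hne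
          have hmem : ((e i.castSucc : Zfin) : ℝ) ∈ Set.Ioo a' b' :=
            Set.mem_Ioo.2 ⟨ha'lt, lt_of_lt_of_le hab hb'⟩
          have hno := hnon _ hmem
          rcases (hmemZfin _).1 (hemem i.castSucc) with hZ | h0 | hT
          · rcases hZ.2 with h | h
            · exact hno.1 ((hphiF1 _ hZ.1).trans h)
            · exact hno.2 ((hphiF2 _ hZ.1).trans h)
          · rw [h0] at ha'lt; linarith
          · rw [hT] at hab
            have := hbI.2
            linarith
        · by_contra hne
          have hblt : ((e i.succ : Zfin) : ℝ) < b' := lt_of_le_of_ne hb' (Ne.symm hne)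
          have hmem : ((e i.succ : Zfin) : ℝ) ∈ Set.Ioo a' b' :=
            Set.mem_Ioo.2 ⟨lt_of_le_of_lt ha' hab, hblt⟩
          have hno := hnon _ hmem
          rcases (hmemZfin _).1 (hemem i.succ) with hZ | h0 | hT
          · rcases hZ.2 with h | h
            · exact hno.1 ((hphiF1 _ hZ.1).trans h)
            · exact hno.2 ((hphiF2 _ hZ.1).trans h)
          · rw [h0] at hab
            have := haI.1
            linarith
          · rw [hT] at hblt; linarith
    · apply Set.Subset.antisymm
      · intro x hx
        by_cases hxT : x = T'
        · subst hxT
          have hjlt : n - 1 < n := by omega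
          refine Set.mem_iUnion.2 ⟨⟨n - 1, hjlt⟩, ?_⟩
          have hsucc : (⟨n - 1, hjlt⟩ : Fin n).succ = Fin.last n := by
            apply Fin.ext
            simp only [Fin.val_succ, Fin.val_last]
            omega
          refine Set.mem_Icc.2 ⟨(hZfinIcc _ (hemem _)).2, ?_⟩
          show x ≤ ((e ((⟨n - 1, hjlt⟩ : Fin n).succ) : Zfin) : ℝ)
          rw [hsucc, heLast]

        · have hxlt : x < T' := lt_of_le_of_ne hx.2 hxT
          have hPne : (Zfin.filter (fun z => z ≤ x)).Nonempty :=
            ⟨0, Finset.mem_filter.2 ⟨h0mem, hx.1⟩⟩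
          have hs₁P := (Zfin.filter (fun z => z ≤ x)).max'_mem hPne
          have hs₁Zfin : (Zfin.filter (fun z => z ≤ x)).max' hPne ∈ Zfin :=
            (Finset.mem_filter.1 hs₁P).1
          have hs₁x : (Zfin.filter (fun z => z ≤ x)).max' hPne ≤ x :=
            (Finset.mem_filter.1 hs₁P).2
          obtain ⟨j, hj⟩ := e.surjective ⟨_, hs₁Zfin⟩
          have hjval : ((e j : Zfin) : ℝ) = (Zfin.filter (fun z => z ≤ x)).max' hPne := by
            rw [hj]
          have hjlast : j ≠ Fin.last n := by
            intro h
            rw [h, heLast] at hjval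
            linarith [hjval ▸ hs₁x]
          have hjlt : (j : ℕ) < n := by
            have h1 := j.isLt
            have h2 : (j:ℕ) ≠ n := fun h => hjlast (Fin.ext (by simp [h]))
            omega
          refine Set.mem_iUnion.2 ⟨⟨(j : ℕ), hjlt⟩, ?_⟩
          have hcs : (⟨(j : ℕ), hjlt⟩ : Fin n).castSucc = j := by
            apply Fin.ext
            rfl
          have hax : ((e (⟨(j : ℕ), hjlt⟩ : Fin n).castSucc : Zfin) : ℝ) ≤ x := by
            rw [hcs, hjval]; exact hs₁x
          have hxb : x ≤ ((e (⟨(j : ℕ), hjlt⟩ : Fin n).succ : Zfin) : ℝ) := by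
            by_contra hcon
            push_neg at hcon
            have hmemP : ((e (⟨(j : ℕ), hjlt⟩ : Fin n).succ : Zfin) : ℝ)
                ∈ Zfin.filter (fun z => z ≤ x) :=
              Finset.mem_filter.2 ⟨hemem _, hcon.le⟩
            have hle := (Zfin.filter (fun z => z ≤ x)).le_max' _ hmemP
            have hlt : ((e (⟨(j : ℕ), hjlt⟩ : Fin n).castSucc : Zfin) : ℝ)
                < ((e (⟨(j : ℕ), hjlt⟩ : Fin n).succ : Zfin) : ℝ) :=
              hstrict Fin.castSucc_lt_succ
            rw [hcs, hjval] at hlt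
            linarith
          exact Set.mem_Icc.2 ⟨hax, hxb⟩
      · apply Set.iUnion_subset
        intro i x hx
        have haI := hZfinIcc _ (hemem i.castSucc)
        have hbI := hZfinIcc _ (hemem i.succ)
        exact Set.mem_Icc.2 ⟨le_trans haI.1 hx.1, le_trans hx.2 hbI.2⟩




end
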